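/- arXiv:1612.02651 — 5 statements merged into one kernel-verified Lean document; each statement's English description precedes it below -/
import Mathlib

section
/- Let G be a τ₂-group and let a, b ∈ G be c-small elements with c := [a,b] ≠ 1. Then c has infinite order in G, and the set {[a,x] : x ∈ C_G(b)} equals {c^t : t ∈ ℤ}. -/
open scoped commutatorElement

noncomputable def grpRank (G : Type*) [Group G] : ℕ :=
  sInf {k : ℕ | ∃ S : Finset G, S.card = k ∧ Subgroup.closure (S : Set G) = ⊤}

def IsTau2 (G : Type*) [Group G] : Prop :=
  Group.FG G ∧ (∀ g : G, g ≠ 1 → ¬IsOfFinOrder g) ∧ ∀ g h : G, ⁅g, h⁆ ∈ Subgroup.center G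

def prodPow {G : Type*} [Group G] {k : ℕ} (v : Fin k → G) (e : Fin k → ℤ) : G :=
  (List.ofFn fun i => v i ^ e i).prod

def tau2Rels (n m : ℕ) (lam : Fin m → Fin n → Fin n → ℤ) :
    Set (FreeGroup (Fin n ⊕ Fin m)) :=
  {r | (∃ i j : Fin n, i < j ∧
          r = ⁅(FreeGroup.of (Sum.inl i) : FreeGroup (Fin n ⊕ Fin m)),
              FreeGroup.of (Sum.inl j)⁆ *
              (prodPow (fun t : Fin m => FreeGroup.of (Sum.inr t)) (fun t => lam t i j))⁻¹) ∨
       (∃ (i : Fin n) (t : Fin m), r = ⁅(FreeGroup.of (Sum.inl i) : FreeGroup (Fin n ⊕ Fin m)),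
              FreeGroup.of (Sum.inr t)⁆) ∨
       (∃ t s : Fin m, r = ⁅(FreeGroup.of (Sum.inr t) : FreeGroup (Fin n ⊕ Fin m)),
              FreeGroup.of (Sum.inr s)⁆)}

def Tau2Group (n m : ℕ) (lam : Fin m → Fin n → Fin n → ℤ) : Type :=
  PresentedGroup (tau2Rels n m lam)

instance (n m : ℕ) (lam : Fin m → Fin n → Fin n → ℤ) : Group (Tau2Group n m lam) :=
  inferInstanceAs (Group (PresentedGroup (tau2Rels n m lam)))

def tau2a {n m : ℕ} {lam : Fin m → Fin n → Fin n → ℤ} (i : Fin n) : Tau2Group n m lam :=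
  PresentedGroup.of (Sum.inl i)

def tau2c {n m : ℕ} {lam : Fin m → Fin n → Fin n → ℤ} (t : Fin m) : Tau2Group n m lam :=
  PresentedGroup.of (Sum.inr t)

def IsCSmall {G : Type*} [Group G] (g : G) : Prop :=
  ∀ x : G, x ∈ Subgroup.centralizer {g} ↔
    ∃ (t : ℤ) (z : G), z ∈ Subgroup.center G ∧ x = g ^ t * z

def IsMalcevBasis {G : Type*} [Group G] {n m : ℕ} (a : Fin n → G) (c : Fin m → G) : Prop :=
  (∀ t, c t ∈ Subgroup.center G) ∧
  (commutator G ≤ Subgroup.closure (Set.range c)) ∧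
  (∀ g : G, ∃! p : (Fin n → ℤ) × (Fin m → ℤ), g = prodPow a p.1 * prodPow c p.2)


lemma comm_zpow_aux {G : Type} [Group G] (a b : G)
    (hz : ⁅a, b⁆ ∈ Subgroup.center G) (t : ℤ) : ⁅a, b ^ t⁆ = ⁅a, b⁆ ^ t := by
  have hcb : Commute ⁅a, b⁆ b := ((Subgroup.mem_center_iff.mp hz) b).symm
  have h1 : a * b * a⁻¹ = ⁅a, b⁆ * b := by group
  have h2 : a * b ^ t * a⁻¹ = (a * b * a⁻¹) ^ t := by
    rw [← conj_zpow]
  rw [h1, (hcb.mul_zpow t)] at h2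
  have : ⁅a, b ^ t⁆ = a * b ^ t * a⁻¹ * b ^ (-t) := by group
  rw [this, h2]
  group

/-- If G is a τ₂-group and a, b are c-small with c := [a,b] ≠ 1, then c has
infinite order and {[a,x] : x ∈ C_G(b)} = {cᵗ : t ∈ ℤ}. -/
theorem stmt8 (G : Type) [Group G] (hT : IsTau2 G) (a b : G)
    (ha : IsCSmall a) (hb : IsCSmall b) (hc : ⁅a, b⁆ ≠ 1) :
    ¬ IsOfFinOrder ⁅a, b⁆ ∧
    ∀ x : G, (∃ y ∈ Subgroup.centralizer {b}, x = ⁅a, y⁆) ↔ ∃ t : ℤ, x = ⁅a, b⁆ ^ t := by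
  obtain ⟨hfg, htf, hcl⟩ := hT
  have hcent : ⁅a, b⁆ ∈ Subgroup.center G := hcl a b
  constructor
  · exact htf _ hc
  · intro x
    constructor
    · rintro ⟨y, hy, rfl⟩
      obtain ⟨t, z, hzc, rfl⟩ := (hb y).mp hy
      refine ⟨t, ?_⟩
      have hz1 : ∀ g : G, g * z = z * g := fun g => (Subgroup.mem_center_iff.mp hzc g)
      have : ⁅a, b ^ t * z⁆ = ⁅a, b ^ t⁆ := by
        rw [commutatorElement_def, commutatorElement_def, mul_inv_rev,
          ← mul_assoc a (b ^ t) z, mul_assoc (a * b ^ t) z a⁻¹, ← hz1 a⁻¹]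
        group
      rw [this, comm_zpow_aux a b hcent t]
    · rintro ⟨t, rfl⟩
      refine ⟨b ^ t, ?_, (comm_zpow_aux a b hcent t).symm⟩
      refine Subgroup.zpow_mem _ ?_ t
      intro g hg
      simp only [Set.mem_singleton_iff] at hg
      subst hg
      rfl
end

section
/- Let G be a τ₂-group with Malcev basis (A;C) = (a_1,…,a_n; c_1,…,c_m), n ≥ 2. Assume that [a_i,a_j] ≠ 1 for all i ≠ j and that each a_i (i = 1,…,n) is c-small. Then every ring of scalars of G is isomorphic, as a ring, to the ring of integers ℤ. -/
open scoped commutatorElement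

lemma mem_commutator_self {G : Type*} [Group G] (g h : G) : ⁅g, h⁆ ∈ commutator G := by
  rw [commutator_def]
  exact Subgroup.commutator_mem_commutator (Subgroup.mem_top g) (Subgroup.mem_top h)

/-- A ring of scalars of a τ₂-group G: a commutative ring R acting faithfully by
(additive, i.e. multiplicative in the group notation) endomorphisms on the abelian
groups G/Z(G) and G', compatibly with the bilinear map induced by the commutator:
f(r·x, y) = f(x, r·y) = r·f(x, y). -/
structure RingOfScalarsOn (R : Type*) (G : Type*) [CommRing R] [Group G] where
  actQ : R → (G ⧸ Subgroup.center G) → (G ⧸ Subgroup.center G)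
  actN : R → ↥(commutator G) → ↥(commutator G)
  actQ_map_mul : ∀ r x y, actQ r (x * y) = actQ r x * actQ r y
  actN_map_mul : ∀ r x y, actN r (x * y) = actN r x * actN r y
  actQ_one : ∀ x, actQ 1 x = x
  actN_one : ∀ x, actN 1 x = x
  actQ_add : ∀ r s x, actQ (r + s) x = actQ r x * actQ s x
  actN_add : ∀ r s x, actN (r + s) x = actN r x * actN s x
  actQ_mul : ∀ r s x, actQ (r * s) x = actQ r (actQ s x)
  actN_mul : ∀ r s x, actN (r * s) x = actN r (actN s x)
  actQ_faithful : ∀ r s : R, (∀ x, actQ r x = actQ s x) → r = s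
  actN_faithful : ∀ r s : R, (∀ x, actN r x = actN s x) → r = s
  compat_left : ∀ (r : R) (g h g' : G),
    (QuotientGroup.mk g' : G ⧸ Subgroup.center G) = actQ r (QuotientGroup.mk g) →
    actN r ⟨⁅g, h⁆, mem_commutator_self g h⟩ = ⟨⁅g', h⁆, mem_commutator_self g' h⟩
  compat_right : ∀ (r : R) (g h h' : G),
    (QuotientGroup.mk h' : G ⧸ Subgroup.center G) = actQ r (QuotientGroup.mk h) →
    actN r ⟨⁅g, h⁆, mem_commutator_self g h⟩ = ⟨⁅g, h'⁆, mem_commutator_self g h'⟩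


section Helpers
variable {G : Type*} [Group G]

lemma comm_mul_left' (hc : ∀ g h : G, ⁅g, h⁆ ∈ Subgroup.center G)
    (x y h : G) : ⁅x * y, h⁆ = ⁅x, h⁆ * ⁅y, h⁆ := by
  have hz := Subgroup.mem_center_iff.mp (hc y h)
  have hz2 := Subgroup.mem_center_iff.mp (hc x h)
  have h1 : y * h = ⁅y, h⁆ * h * y := by rw [commutatorElement_def]; group
  calc ⁅x * y, h⁆ = x * (y * h) * y⁻¹ * x⁻¹ * h⁻¹ := by
        rw [commutatorElement_def]; group
    _ = x * (⁅y, h⁆ * h * y) * y⁻¹ * x⁻¹ * h⁻¹ := by rw [h1]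
    _ = x * ⁅y, h⁆ * (h * x⁻¹ * h⁻¹) := by group
    _ = ⁅y, h⁆ * x * (h * x⁻¹ * h⁻¹) := by rw [hz x]
    _ = ⁅y, h⁆ * (x * h * x⁻¹ * h⁻¹) := by group
    _ = ⁅y, h⁆ * ⁅x, h⁆ := by rw [commutatorElement_def x h]
    _ = ⁅x, h⁆ * ⁅y, h⁆ := hz2 _

lemma comm_inv_left' (hc : ∀ g h : G, ⁅g, h⁆ ∈ Subgroup.center G)
    (x h : G) : ⁅x⁻¹, h⁆ = ⁅x, h⁆⁻¹ := by
  have := comm_mul_left' hc x x⁻¹ h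
  rw [mul_inv_cancel, commutatorElement_one_left] at this
  exact eq_inv_of_mul_eq_one_right this.symm

lemma comm_zpow_left' (hc : ∀ g h : G, ⁅g, h⁆ ∈ Subgroup.center G)
    (g h : G) (k : ℤ) : ⁅g ^ k, h⁆ = ⁅g, h⁆ ^ k := by
  induction k using Int.induction_on with
  | zero => simp [commutatorElement_one_left]
  | succ k ih =>
      rw [zpow_add_one, comm_mul_left' hc, ih, zpow_add_one]
  | pred k ih =>
      rw [zpow_sub_one, comm_mul_left' hc, ih, zpow_sub_one,
        comm_inv_left' hc]

lemma comm_zpow_right' (hc : ∀ g h : G, ⁅g, h⁆ ∈ Subgroup.center G)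
    (g h : G) (k : ℤ) : ⁅g, h ^ k⁆ = ⁅g, h⁆ ^ k := by
  calc ⁅g, h ^ k⁆ = ⁅h ^ k, g⁆⁻¹ := (commutatorElement_inv _ _).symm
    _ = (⁅h, g⁆ ^ k)⁻¹ := by rw [comm_zpow_left' hc]
    _ = (⁅h, g⁆⁻¹) ^ k := (inv_zpow _ _).symm
    _ = ⁅g, h⁆ ^ k := by rw [commutatorElement_inv]

lemma comm_central_right' (hc : ∀ g h : G, ⁅g, h⁆ ∈ Subgroup.center G)
    (g x z : G) (hz : z ∈ Subgroup.center G) : ⁅g, x * z⁆ = ⁅g, x⁆ := by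
  have h1 : ⁅z, g⁆ = 1 :=
    commutatorElement_eq_one_iff_mul_comm.mpr (Subgroup.mem_center_iff.mp hz g).symm
  calc ⁅g, x * z⁆ = ⁅x * z, g⁆⁻¹ := (commutatorElement_inv _ _).symm
    _ = (⁅x, g⁆ * ⁅z, g⁆)⁻¹ := by rw [comm_mul_left' hc]
    _ = ⁅x, g⁆⁻¹ := by rw [h1, mul_one]
    _ = ⁅g, x⁆ := commutatorElement_inv _ _

lemma eq_one_of_zpow_eq_one' (htf : ∀ g : G, g ≠ 1 → ¬IsOfFinOrder g)
    {g : G} {k : ℤ} (hk : k ≠ 0) (h : g ^ k = 1) : g = 1 := by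
  by_contra hg
  exact htf g hg (isOfFinOrder_iff_zpow_eq_one.mpr ⟨k, hk, h⟩)

end Helpers

/-- If G is a τ₂-group with Malcev basis (a₁,…,aₙ; c₁,…,cₘ), n ≥ 2, such
that [aᵢ,aⱼ] ≠ 1 for all i ≠ j and every aᵢ is c-small, then every ring of scalars of G
is isomorphic as a ring to ℤ. -/
theorem stmt10 (G : Type) [Group G] (n m : ℕ) (hn : 2 ≤ n)
    (a : Fin n → G) (c : Fin m → G)
    (hT : IsTau2 G) (hMB : IsMalcevBasis a c)
    (hne : ∀ i j : Fin n, i ≠ j → ⁅a i, a j⁆ ≠ 1)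
    (hcs : ∀ i : Fin n, IsCSmall (a i)) :
    ∀ (R : Type) [CommRing R], RingOfScalarsOn R G → Nonempty (R ≃+* ℤ) := by
  intro R _inst S
  obtain ⟨-, htf, hcent⟩ := hT
  have hi0 : (0 : ℕ) < n := by omega
  have hi1 : (1 : ℕ) < n := by omega
  set i0 : Fin n := ⟨0, hi0⟩ with hi0def
  set i1 : Fin n := ⟨1, hi1⟩ with hi1def
  have hne01 : i0 ≠ i1 := by simp [hi0def, hi1def, Fin.ext_iff]
  -- exponents of nontrivial commutators are determined
  have hzero : ∀ (i j : Fin n), i ≠ j → ∀ k : ℤ, ⁅a i, a j⁆ ^ k = 1 → k = 0 := by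
    intro i j hij k hk
    by_contra h0
    exact hne i j hij (eq_one_of_zpow_eq_one' htf h0 hk)
  have hcancel : ∀ (i j : Fin n), i ≠ j → ∀ (t s : ℤ),
      ⁅a i, a j⁆ ^ t = ⁅a i, a j⁆ ^ s → t = s := by
    intro i j hij t s hts
    have h1 : ⁅a i, a j⁆ ^ (t - s) = 1 := by rw [zpow_sub, hts, mul_inv_cancel]
    have := hzero i j hij (t - s) h1
    omega
  -- powers of mk (a i) are injective in the exponent
  have huniq : ∀ (i : Fin n) (t s : ℤ),
      (QuotientGroup.mk (a i) : G ⧸ Subgroup.center G) ^ t = (QuotientGroup.mk (a i)) ^ s →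
      t = s := by
    intro i t s h
    have hj : ∃ j : Fin n, i ≠ j := by
      by_cases hii : i = i0
      · exact ⟨i1, by rw [hii]; exact hne01⟩
      · exact ⟨i0, hii⟩
    obtain ⟨j, hij⟩ := hj
    have hz : a i ^ (t - s) ∈ Subgroup.center G := by
      rw [← QuotientGroup.eq_one_iff]
      rw [QuotientGroup.mk_zpow, zpow_sub, h, mul_inv_cancel]
    have h1 : ⁅a i, a j⁆ ^ (t - s) = 1 := by
      rw [← comm_zpow_left' hcent]
      exact commutatorElement_eq_one_iff_mul_comm.mpr
        (Subgroup.mem_center_iff.mp hz (a j)).symm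
    have := hzero i j hij (t - s) h1
    omega
  -- step 1 : each a i is scaled by an integer power
  have hstep : ∀ (r : R) (i : Fin n), ∃ t : ℤ,
      S.actQ r (QuotientGroup.mk (a i)) =
        (QuotientGroup.mk (a i) : G ⧸ Subgroup.center G) ^ t := by
    intro r i
    obtain ⟨g', hg'⟩ := QuotientGroup.mk_surjective (S.actQ r (QuotientGroup.mk (a i)))
    have hL := S.compat_left r (a i) (a i) g' hg'
    have hR := S.compat_right r (a i) (a i) g' hg'
    have heq : ⁅g', a i⁆ = ⁅a i, g'⁆ := Subtype.ext_iff.mp (hL.symm.trans hR)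
    have hsq : ⁅g', a i⁆ ^ (2 : ℤ) = 1 := by
      rw [zpow_two]
      nth_rewrite 2 [heq]
      rw [← commutatorElement_inv, inv_mul_cancel]
    have hcm : ⁅g', a i⁆ = 1 := eq_one_of_zpow_eq_one' htf (by norm_num) hsq
    have hmem : g' ∈ Subgroup.centralizer {a i} := by
      rw [Subgroup.mem_centralizer_iff]
      intro h hh
      rw [Set.mem_singleton_iff] at hh
      subst hh
      exact (commutatorElement_eq_one_iff_mul_comm.mp hcm).symm
    obtain ⟨t, z, hz, hgz⟩ := (hcs i g').mp hmem
    refine ⟨t, ?_⟩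
    rw [← hg', hgz, QuotientGroup.mk_mul, QuotientGroup.mk_zpow,
      (QuotientGroup.eq_one_iff z).mpr hz, mul_one]
  -- step 2 : the exponents agree across indices
  have hmatch : ∀ (r : R) (i j : Fin n), i ≠ j → ∀ t s : ℤ,
      S.actQ r (QuotientGroup.mk (a i)) = (QuotientGroup.mk (a i) : G ⧸ Subgroup.center G) ^ t →
      S.actQ r (QuotientGroup.mk (a j)) = (QuotientGroup.mk (a j) : G ⧸ Subgroup.center G) ^ s →
      t = s := by
    intro r i j hij t s hti hsj
    have hL := S.compat_left r (a i) (a j) (a i ^ t)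
      (by rw [QuotientGroup.mk_zpow]; exact hti.symm)
    have hR := S.compat_right r (a i) (a j) (a j ^ s)
      (by rw [QuotientGroup.mk_zpow]; exact hsj.symm)
    have h1 : ⁅a i ^ t, a j⁆ = ⁅a i, a j ^ s⁆ := Subtype.ext_iff.mp (hL.symm.trans hR)
    rw [comm_zpow_left' hcent, comm_zpow_right' hcent] at h1
    exact hcancel i j hij t s h1
  -- Q := G / Z(G) is abelian
  have hQcomm : ∀ x y : G ⧸ Subgroup.center G, x * y = y * x := by
    intro x y
    obtain ⟨g, rfl⟩ := QuotientGroup.mk_surjective x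
    obtain ⟨h, rfl⟩ := QuotientGroup.mk_surjective y
    rw [← QuotientGroup.mk_mul, ← QuotientGroup.mk_mul]
    apply QuotientGroup.eq.mpr
    have hcc : (g * h)⁻¹ * (h * g) = ⁅h⁻¹, g⁻¹⁆ := by
      rw [commutatorElement_def]
      group
    rw [hcc]
    exact hcent h⁻¹ g⁻¹
  -- Q is generated by the images of the a i
  have hgen : ∀ x : G ⧸ Subgroup.center G,
      x ∈ Subgroup.closure
        (Set.range fun i => (QuotientGroup.mk (a i) : G ⧸ Subgroup.center G)) := by
    intro x
    obtain ⟨g, rfl⟩ := QuotientGroup.mk_surjective x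
    obtain ⟨⟨p, q⟩, hpq, -⟩ := hMB.2.2 g
    rw [hpq, QuotientGroup.mk_mul]
    have hq : (QuotientGroup.mk (prodPow c q) : G ⧸ Subgroup.center G) = 1 := by
      rw [QuotientGroup.eq_one_iff]
      apply Subgroup.list_prod_mem
      intro x hx
      rw [List.mem_ofFn] at hx
      obtain ⟨t, rfl⟩ := hx
      exact Subgroup.zpow_mem _ (hMB.1 t) _
    rw [hq, mul_one]
    have hrw : (QuotientGroup.mk (prodPow a p) : G ⧸ Subgroup.center G)
        = (List.ofFn fun i => (QuotientGroup.mk (a i) : G ⧸ Subgroup.center G) ^ p i).prod := by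
      show (QuotientGroup.mk' (Subgroup.center G)) (List.ofFn fun i => a i ^ p i).prod = _
      rw [map_list_prod, List.map_ofFn]
      have hfun : (⇑(QuotientGroup.mk' (Subgroup.center G)) ∘ fun i => a i ^ p i)
          = fun i => (QuotientGroup.mk (a i) : G ⧸ Subgroup.center G) ^ p i := by
        funext i
        exact map_zpow (QuotientGroup.mk' (Subgroup.center G)) (a i) (p i)
      rw [hfun]
    rw [hrw]
    apply Subgroup.list_prod_mem
    intro x hx
    rw [List.mem_ofFn] at hx
    obtain ⟨i, rfl⟩ := hx
    exact Subgroup.zpow_mem _ (Subgroup.subset_closure (Set.mem_range_self i)) _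
  -- actQ r 1 = 1, actQ 0 x = 1
  have hQone : ∀ r : R, S.actQ r (1 : G ⧸ Subgroup.center G) = 1 := by
    intro r
    have h1 := S.actQ_map_mul r 1 1
    rw [mul_one] at h1
    exact (left_eq_mul.mp h1)
  have hQzero : ∀ x : G ⧸ Subgroup.center G, S.actQ (0 : R) x = 1 := by
    intro x
    have h1 := S.actQ_add 0 0 x
    rw [add_zero] at h1
    exact (left_eq_mul.mp h1)
  -- each r acts on Q as an integer power
  have hexp : ∀ r : R, ∃ t : ℤ, ∀ x : G ⧸ Subgroup.center G, S.actQ r x = x ^ t := by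
    intro r
    obtain ⟨t, ht⟩ := hstep r i0
    refine ⟨t, ?_⟩
    have hall : ∀ i : Fin n,
        S.actQ r (QuotientGroup.mk (a i)) =
          (QuotientGroup.mk (a i) : G ⧸ Subgroup.center G) ^ t := by
      intro i
      obtain ⟨s, hs⟩ := hstep r i
      by_cases hii : i = i0
      · subst hii
        have : t = s := huniq i0 t s (ht.symm.trans hs)
        rw [hs, this]
      · have : s = t := hmatch r i i0 hii s t hs ht
        rw [hs, this]
    intro x
    refine Subgroup.closure_induction ?_ ?_ ?_ ?_ (hgen x)
    · rintro y ⟨i, rfl⟩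
      exact hall i
    · rw [one_zpow]
      exact hQone r
    · intro x y _ _ px py
      have hxy : Commute x y := hQcomm x y
      rw [S.actQ_map_mul, px, py, hxy.mul_zpow]
    · intro x _ px
      have h1 : S.actQ r x * S.actQ r x⁻¹ = 1 := by
        rw [← S.actQ_map_mul, mul_inv_cancel]
        exact hQone r
      calc S.actQ r x⁻¹ = (S.actQ r x)⁻¹ := (inv_eq_of_mul_eq_one_right h1).symm
        _ = (x ^ t)⁻¹ := by rw [px]
        _ = (x⁻¹) ^ t := (inv_zpow _ _).symm
  -- integer casts act as integer powers
  have hcast : ∀ (k : ℤ) (x : G ⧸ Subgroup.center G), S.actQ ((k : ℤ) : R) x = x ^ k := by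
    intro k
    induction k using Int.induction_on with
    | zero =>
        intro x
        rw [Int.cast_zero, zpow_zero]
        exact hQzero x
    | succ k ih =>
        intro x
        rw [show (((k : ℤ) + 1 : ℤ) : R) = (((k : ℤ) : ℤ) : R) + 1 by push_cast; ring]
        rw [S.actQ_add, ih, S.actQ_one, zpow_add_one]
    | pred k ih =>
        intro x
        rw [show ((-(k : ℤ) - 1 : ℤ) : R) = ((-(k : ℤ) : ℤ) : R) + (-1 : R) by push_cast; ring]
        rw [S.actQ_add, ih]
        have hm : S.actQ (-1 : R) x = x⁻¹ := by
          have h2 := S.actQ_add 1 (-1) x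
          rw [add_neg_cancel, hQzero, S.actQ_one] at h2
          exact (inv_eq_of_mul_eq_one_right h2.symm).symm
        rw [hm, zpow_sub_one]
  -- the cast ring hom is bijective
  have hsurj : ∀ r : R, ∃ k : ℤ, ((k : ℤ) : R) = r := by
    intro r
    obtain ⟨t, ht⟩ := hexp r
    refine ⟨t, (S.actQ_faithful r ((t : ℤ) : R) ?_).symm⟩
    intro x
    rw [ht, hcast]
  have hinj : Function.Injective (Int.castRingHom R) := by
    intro k l hkl
    have hkl' : ((k : ℤ) : R) = ((l : ℤ) : R) := hkl
    have h1 : (QuotientGroup.mk (a i0) : G ⧸ Subgroup.center G) ^ k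
        = (QuotientGroup.mk (a i0)) ^ l := by
      rw [← hcast k, ← hcast l, hkl']
    exact huniq i0 k l h1
  have hbij : Function.Bijective (Int.castRingHom R) :=
    ⟨hinj, fun r => (hsurj r).imp (fun k hk => hk)⟩
  exact ⟨(RingEquiv.ofBijective (Int.castRingHom R) hbij).symm⟩
end

section
/- Fix integers n, m with m ≥ n−1 ≥ 1. For ℓ ≥ 1, consider all (2ℓ+1)^{m·n(n−1)/2} integer tuples λ = (λ_{t,i,j})_{1≤t≤m, 1≤i<j≤n} with |λ_{t,i,j}| ≤ ℓ for all t,i,j, and for each λ let G = G(n,m,λ) be the τ₂-presented group. Then the proportion of such tuples λ for which G simultaneously satisfies (i) Z(G) = ⟨c_1,…,c_m⟩, (ii) every a_k (k = 1,…,n) is c-small in G, and (iii) [a_i,a_j] ≠ 1 for all 1 ≤ i < j ≤ n, tends to 1 as ℓ → ∞. -/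
open scoped commutatorElement

/-- Index type for the pairs 1 ≤ i < j ≤ n. -/
abbrev PairIdx (n : ℕ) := {p : Fin n × Fin n // p.1 < p.2}

/-- A tuple λ = (λ_{t,i,j})_{1≤t≤m, 1≤i<j≤n} of integers, repackaged as a function
Fin m → Fin n → Fin n → ℤ (entries with i ≥ j are irrelevant and set to 0). -/
def lamOf {n m : ℕ} (μ : Fin m → PairIdx n → ℤ) : Fin m → Fin n → Fin n → ℤ :=
  fun t i j => if h : i < j then μ t ⟨(i, j), h⟩ else 0

namespace Tau2Aux


variable {G : Type*} [Group G] {H : Type*} [Group H]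

theorem prodPow_succ {k : ℕ} (v : Fin (k+1) → G) (e : Fin (k+1) → ℤ) :
    prodPow v e = v 0 ^ e 0 * prodPow (v ∘ Fin.succ) (e ∘ Fin.succ) := by
  simp [prodPow, List.ofFn_succ]

theorem prodPow_zero {k : ℕ} (v : Fin k → G) : prodPow v 0 = 1 := by
  induction k with
  | zero => simp [prodPow]
  | succ k ih => rw [prodPow_succ]; simpa using ih (v ∘ Fin.succ)

theorem prodPow_map (F : G →* H) {k : ℕ} (v : Fin k → G) (e : Fin k → ℤ) :
    F (prodPow v e) = prodPow (fun i => F (v i)) e := by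
  rw [prodPow, map_list_prod, List.map_ofFn]
  simp [prodPow, Function.comp_def, map_zpow]

theorem prodPow_single {k : ℕ} (v : Fin k → G) (j : Fin k) (s : ℤ) :
    prodPow v (Pi.single j s) = v j ^ s := by
  induction k with
  | zero => exact j.elim0
  | succ k ih =>
    rw [prodPow_succ]
    refine Fin.cases ?_ (fun j' => ?_) j
    · have h1 : ((Pi.single (0 : Fin (k+1)) s : Fin (k+1) → ℤ)) ∘ Fin.succ = 0 := by
        funext i; simp [Pi.single_apply, (Fin.succ_ne_zero i), Function.comp]
      have h2 : (Pi.single (0 : Fin (k+1)) s : Fin (k+1) → ℤ) 0 = s := by simp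
      rw [h1, h2, prodPow_zero, mul_one]
    · have h1 : ((Pi.single (j'.succ : Fin (k+1)) s : Fin (k+1) → ℤ)) ∘ Fin.succ
          = (Pi.single j' s : Fin k → ℤ) := by
        funext i
        simp [Pi.single_apply, Function.comp, Fin.succ_inj]
      have h2 : (Pi.single (j'.succ : Fin (k+1)) s : Fin (k+1) → ℤ) 0 = 0 := by
        simp [Pi.single_apply, (Fin.succ_ne_zero j').symm]
      rw [h1, h2, ih]
      simp

theorem prodPow_mult {ι : Type*} {k : ℕ} [Fintype ι] [DecidableEq ι]
    (w : Fin k → ι → ℤ) (e : Fin k → ℤ) :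
    prodPow (fun i => Multiplicative.ofAdd (w i)) e
      = Multiplicative.ofAdd (∑ i, e i • w i) := by
  simp only [prodPow, List.prod_ofFn]
  apply Multiplicative.toAdd.injective
  rw [toAdd_prod]
  simp [toAdd_zpow]

theorem sum_single_eq {ι : Type*} [Fintype ι] [DecidableEq ι] (e : ι → ℤ) :
    ∑ i, e i • Pi.single i (1:ℤ) = e := by
  funext j
  simp [Finset.sum_apply, Pi.single_apply]

theorem swap_zpow {g h z : G} (hz : z ∈ Subgroup.center G)
    (hc : h * g = z * (g * h)) (s : ℤ) : h * g ^ s = z ^ s * (g ^ s * h) := by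
  have hcz : Commute z g := (Subgroup.mem_center_iff.1 hz g).symm
  have hconj : h * g * h⁻¹ = z * g := by rw [hc]; group
  have key : h * g ^ s * h⁻¹ = z ^ s * g ^ s := by
    calc h * g ^ s * h⁻¹ = (h * g * h⁻¹) ^ s := (conj_zpow).symm
      _ = (z * g) ^ s := by rw [hconj]
      _ = z ^ s * g ^ s := hcz.mul_zpow s
  calc h * g ^ s = (h * g ^ s * h⁻¹) * h := by group
    _ = (z ^ s * g ^ s) * h := by rw [key]
    _ = z ^ s * (g ^ s * h) := by group

theorem mul_prodPow {N : ℕ} (b : Fin N → G) (Z : Subgroup G)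
    (hZ : Z ≤ Subgroup.center G)
    (hcm : ∀ i j, ∃ z ∈ Z, b j * b i = z * (b i * b j)) (k : Fin N) (v : Fin N → ℤ) :
    ∃ z ∈ Z, b k * prodPow b v = prodPow b (v + Pi.single k 1) * z := by
  induction N with
  | zero => exact k.elim0
  | succ N ih =>
    refine Fin.cases ?_ (fun j => ?_) k
    · refine ⟨1, one_mem _, ?_⟩
      rw [mul_one, prodPow_succ, prodPow_succ]
      have h1 : (v + (Pi.single (0 : Fin (N+1)) 1 : Fin (N+1) → ℤ)) ∘ Fin.succ
          = v ∘ Fin.succ := by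
        funext i; simp [Pi.single_apply, (Fin.succ_ne_zero i), Function.comp]
      have h2 : (v + (Pi.single (0 : Fin (N+1)) 1 : Fin (N+1) → ℤ)) 0 = v 0 + 1 := by simp
      rw [h1, h2, zpow_add_one]
      calc b 0 * (b 0 ^ v 0 * prodPow (b ∘ Fin.succ) (v ∘ Fin.succ))
          = (b 0 * b 0 ^ v 0) * prodPow (b ∘ Fin.succ) (v ∘ Fin.succ) := by group
        _ = (b 0 ^ v 0 * b 0) * prodPow (b ∘ Fin.succ) (v ∘ Fin.succ) := by
            rw [(Commute.self_zpow (b 0) (v 0)).eq]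
        _ = _ := by group
    · obtain ⟨z₁, hz₁, hsw⟩ := hcm 0 j.succ
      obtain ⟨z₂, hz₂, hins⟩ := ih (b ∘ Fin.succ) (fun i j => by
        obtain ⟨z, hz, hh⟩ := hcm i.succ j.succ; exact ⟨z, hz, hh⟩) j (v ∘ Fin.succ)
      refine ⟨z₁ ^ v 0 * z₂, mul_mem (zpow_mem hz₁ _) hz₂, ?_⟩
      rw [prodPow_succ, prodPow_succ]
      have h1 : (v + (Pi.single (j.succ : Fin (N+1)) 1 : Fin (N+1) → ℤ)) ∘ Fin.succ
          = v ∘ Fin.succ + (Pi.single j 1 : Fin N → ℤ) := by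
        funext i; simp [Pi.single_apply, Function.comp, Fin.succ_inj]
      have h2 : (v + (Pi.single (j.succ : Fin (N+1)) 1 : Fin (N+1) → ℤ)) 0 = v 0 := by
        simp [Pi.single_apply, (Fin.succ_ne_zero j).symm]
      rw [h1, h2]
      set P := prodPow (b ∘ Fin.succ) (v ∘ Fin.succ + (Pi.single j 1 : Fin N → ℤ)) with hP
      have step1 : b j.succ * (b 0 ^ v 0 * prodPow (b ∘ Fin.succ) (v ∘ Fin.succ))
          = z₁ ^ v 0 * (b 0 ^ v 0 * (b j.succ * prodPow (b ∘ Fin.succ) (v ∘ Fin.succ))) := by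
        rw [← mul_assoc, swap_zpow (hZ hz₁) hsw]; group
      have hins' : b j.succ * prodPow (b ∘ Fin.succ) (v ∘ Fin.succ) = P * z₂ := hins
      rw [step1, hins']
      have hc1 : z₁ ^ v 0 ∈ Subgroup.center G := zpow_mem (hZ hz₁) _
      calc z₁ ^ v 0 * (b 0 ^ v 0 * (P * z₂))
          = (b 0 ^ v 0 * (P * z₂)) * z₁ ^ v 0 := (Subgroup.mem_center_iff.1 hc1 _).symm
        _ = (b 0 ^ v 0 * P) * (z₂ * z₁ ^ v 0) := by group
        _ = (b 0 ^ v 0 * P) * (z₁ ^ v 0 * z₂) := by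
            rw [Subgroup.mem_center_iff.1 hc1 z₂]



/-- The bilinear form used to define the model group. -/
def Bf {n m : ℕ} (lam : Fin m → Fin n → Fin n → ℤ) (v w : Fin n → ℤ) : Fin m → ℤ :=
  fun t => ∑ i, ∑ j, lam t i j * v i * w j

theorem Bf_add_left {n m : ℕ} (lam : Fin m → Fin n → Fin n → ℤ) (v v' w : Fin n → ℤ) :
    Bf lam (v + v') w = Bf lam v w + Bf lam v' w := by
  funext t; simp [Bf, mul_add, add_mul, Finset.sum_add_distrib]

theorem Bf_add_right {n m : ℕ} (lam : Fin m → Fin n → Fin n → ℤ) (v w w' : Fin n → ℤ) :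
    Bf lam v (w + w') = Bf lam v w + Bf lam v w' := by
  funext t; simp [Bf, mul_add, add_mul, Finset.sum_add_distrib]

theorem Bf_zero_left {n m : ℕ} (lam : Fin m → Fin n → Fin n → ℤ) (w : Fin n → ℤ) :
    Bf lam 0 w = 0 := by funext t; simp [Bf]

theorem Bf_zero_right {n m : ℕ} (lam : Fin m → Fin n → Fin n → ℤ) (v : Fin n → ℤ) :
    Bf lam v 0 = 0 := by funext t; simp [Bf]

theorem Bf_neg_left {n m : ℕ} (lam : Fin m → Fin n → Fin n → ℤ) (v w : Fin n → ℤ) :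
    Bf lam (-v) w = - Bf lam v w := by
  funext t; simp [Bf, mul_neg, neg_mul, Finset.sum_neg_distrib]

theorem Bf_neg_right {n m : ℕ} (lam : Fin m → Fin n → Fin n → ℤ) (v w : Fin n → ℤ) :
    Bf lam v (-w) = - Bf lam v w := by
  funext t; simp [Bf, mul_neg, neg_mul, Finset.sum_neg_distrib]

theorem Bf_single_single {n m : ℕ} (lam : Fin m → Fin n → Fin n → ℤ) (i j : Fin n) :
    Bf lam (Pi.single i 1) (Pi.single j 1) = fun t => lam t i j := by
  funext t
  simp [Bf, Pi.single_apply, mul_ite, ite_mul, Finset.sum_ite_eq]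

theorem Bf_single_right {n m : ℕ} (lam : Fin m → Fin n → Fin n → ℤ) (v : Fin n → ℤ) (k : Fin n) :
    Bf lam v (Pi.single k 1) = fun t => ∑ i, lam t i k * v i := by
  funext t
  simp [Bf, Pi.single_apply, mul_ite, ite_mul, Finset.sum_ite_eq]

theorem Bf_single_left {n m : ℕ} (lam : Fin m → Fin n → Fin n → ℤ) (v : Fin n → ℤ) (k : Fin n) :
    Bf lam (Pi.single k 1) v = fun t => ∑ j, lam t k j * v j := by
  funext t
  rw [Bf, Finset.sum_comm]
  simp [Pi.single_apply, mul_ite, ite_mul, Finset.sum_ite_eq]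

/-- The model group: pairs `(v, w)` with multiplication twisted by `Bf`. -/
@[ext]
structure MG (n m : ℕ) (lam : Fin m → Fin n → Fin n → ℤ) where
  v : Fin n → ℤ
  w : Fin m → ℤ

namespace MG

variable {n m : ℕ} {lam : Fin m → Fin n → Fin n → ℤ}

instance : Group (MG n m lam) where
  mul x y := ⟨x.v + y.v, x.w + y.w + Bf lam x.v y.v⟩
  one := ⟨0, 0⟩
  inv x := ⟨-x.v, -x.w + Bf lam x.v x.v⟩
  mul_assoc x y z := by
    ext1
    · show (x.v + y.v) + z.v = x.v + (y.v + z.v); exact add_assoc _ _ _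
    · show x.w + y.w + Bf lam x.v y.v + z.w + Bf lam (x.v + y.v) z.v
        = x.w + (y.w + z.w + Bf lam y.v z.v) + Bf lam x.v (y.v + z.v)
      rw [Bf_add_left, Bf_add_right]; abel
  one_mul x := by
    ext1
    · show (0 : Fin n → ℤ) + x.v = x.v; simp
    · show (0 : Fin m → ℤ) + x.w + Bf lam 0 x.v = x.w; simp [Bf_zero_left]
  mul_one x := by
    ext1
    · show x.v + 0 = x.v; simp
    · show x.w + 0 + Bf lam x.v 0 = x.w; simp [Bf_zero_right]
  inv_mul_cancel x := by
    ext1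
    · show -x.v + x.v = 0; simp
    · show (-x.w + Bf lam x.v x.v) + x.w + Bf lam (-x.v) x.v = 0
      rw [Bf_neg_left]; abel

theorem mul_def (x y : MG n m lam) : x * y = ⟨x.v + y.v, x.w + y.w + Bf lam x.v y.v⟩ := rfl
theorem inv_def (x : MG n m lam) : x⁻¹ = ⟨-x.v, -x.w + Bf lam x.v x.v⟩ := rfl
theorem one_def : (1 : MG n m lam) = ⟨0, 0⟩ := rfl

theorem commutator_eq (x y : MG n m lam) :
    ⁅x, y⁆ = ⟨0, Bf lam x.v y.v - Bf lam y.v x.v⟩ := by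
  rw [commutatorElement_def]
  rw [mul_def, mul_def, inv_def, inv_def, mul_def]
  ext1
  · show x.v + y.v + -x.v + -y.v = 0; abel
  · show x.w + y.w + Bf lam x.v y.v + (-x.w + Bf lam x.v x.v) + Bf lam (x.v + y.v) (-x.v)
        + (-y.w + Bf lam y.v y.v) + Bf lam (x.v + y.v + -x.v) (-y.v)
      = Bf lam x.v y.v - Bf lam y.v x.v
    rw [show x.v + y.v + -x.v = y.v by abel]
    rw [Bf_add_left, Bf_neg_right, Bf_neg_right, Bf_neg_right]
    abel

/-- generator `a`. -/
def ag (i : Fin n) : MG n m lam := ⟨Pi.single i 1, 0⟩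
/-- generator `c`. -/
def cg (t : Fin m) : MG n m lam := ⟨0, Pi.single t 1⟩

/-- embedding of the `w`-part as a subgroup. -/
def iota : Multiplicative (Fin m → ℤ) →* MG n m lam where
  toFun w := ⟨0, w.toAdd⟩
  map_one' := rfl
  map_mul' a b := by
    rw [mul_def]
    ext1
    · simp
    · show (a.toAdd + b.toAdd : Fin m → ℤ) = a.toAdd + b.toAdd + Bf lam 0 0
      simp [Bf_zero_left]

/-- projection onto the `v`-part. -/
def piv : MG n m lam →* Multiplicative (Fin n → ℤ) where
  toFun x := Multiplicative.ofAdd x.v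
  map_one' := rfl
  map_mul' a b := rfl

theorem prodPow_mult' {ι : Type*} {k : ℕ} [Fintype ι] [DecidableEq ι]
    (w : Fin k → ι → ℤ) (e : Fin k → ℤ) :
    prodPow (fun i => Multiplicative.ofAdd (w i)) e
      = Multiplicative.ofAdd (∑ i, e i • w i) := by
  simp only [prodPow, List.prod_ofFn]
  apply Multiplicative.toAdd.injective
  rw [toAdd_prod]
  simp [toAdd_zpow]

theorem prodPow_map' {G H : Type*} [Group G] [Group H] (F : G →* H) {k : ℕ}
    (v : Fin k → G) (e : Fin k → ℤ) :
    F (prodPow v e) = prodPow (fun i => F (v i)) e := by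
  rw [prodPow, map_list_prod, List.map_ofFn]
  simp [prodPow, Function.comp_def, map_zpow]

theorem sum_single_eq' {ι : Type*} [Fintype ι] [DecidableEq ι] (e : ι → ℤ) :
    ∑ i, e i • Pi.single i (1:ℤ) = e := by
  funext j
  simp [Finset.sum_apply, Pi.single_apply]

theorem prodPow_cg (e : Fin m → ℤ) : prodPow (cg : Fin m → MG n m lam) e = ⟨0, e⟩ := by
  have h : (cg : Fin m → MG n m lam)
      = fun t => iota (Multiplicative.ofAdd (Pi.single t (1:ℤ))) := rfl
  rw [h, ← prodPow_map' iota, prodPow_mult', sum_single_eq']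
  rfl

theorem prodPow_piv (x : Fin n → MG n m lam) (e : Fin n → ℤ) :
    piv (prodPow x e) = Multiplicative.ofAdd (∑ i, e i • (x i).v) := by
  rw [prodPow_map' piv]
  exact prodPow_mult' (fun i => (x i).v) e

end MG



section G

variable {n m : ℕ} {lam : Fin m → Fin n → Fin n → ℤ}

/-- the map sending generators to the model group -/
def fM : (Fin n ⊕ Fin m) → MG n m lam := Sum.elim MG.ag MG.cg

theorem hrel (hupper : ∀ t i j, ¬ i < j → lam t i j = 0) :
    ∀ r ∈ tau2Rels n m lam, FreeGroup.lift (fM (lam := lam)) r = 1 := by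
  rintro r (⟨i, j, hij, rfl⟩ | ⟨i, t, rfl⟩ | ⟨t, s, rfl⟩)
  · rw [map_mul, map_inv, map_commutatorElement, prodPow_map]
    simp only [FreeGroup.lift_apply_of]
    show ⁅(MG.ag i : MG n m lam), MG.ag j⁆
        * (prodPow (fun t => (MG.cg t : MG n m lam)) (fun t => lam t i j))⁻¹ = 1
    rw [MG.commutator_eq, MG.prodPow_cg]
    have h1 : (MG.ag i : MG n m lam).v = Pi.single i 1 := rfl
    have h2 : (MG.ag j : MG n m lam).v = Pi.single j 1 := rfl
    rw [mul_inv_eq_one]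
    ext1
    · rfl
    · show Bf lam (MG.ag i : MG n m lam).v (MG.ag j).v
          - Bf lam (MG.ag j : MG n m lam).v (MG.ag i).v = fun t => lam t i j
      rw [h1, h2, Bf_single_single, Bf_single_single]
      funext t
      have : lam t j i = 0 := hupper t j i (lt_asymm hij)
      simp [Pi.sub_apply, this]
  · rw [map_commutatorElement]
    simp only [FreeGroup.lift_apply_of]
    show ⁅(MG.ag i : MG n m lam), MG.cg t⁆ = 1
    rw [MG.commutator_eq]
    show (⟨0, Bf lam (Pi.single i 1) 0 - Bf lam 0 (Pi.single i 1)⟩ : MG n m lam) = 1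
    rw [MG.one_def]
    ext1
    · rfl
    · show Bf lam (Pi.single i 1) 0 - Bf lam 0 (Pi.single i 1) = 0
      funext t
      simp [Bf, Finset.sum_apply]
  · rw [map_commutatorElement]
    simp only [FreeGroup.lift_apply_of]
    show ⁅(MG.cg t : MG n m lam), MG.cg s⁆ = 1
    rw [MG.commutator_eq]
    rw [MG.one_def]
    ext1
    · rfl
    · show Bf lam 0 0 - Bf lam 0 0 = 0
      simp

variable (hupper : ∀ t i j, ¬ i < j → lam t i j = 0)

/-- The homomorphism from the τ₂ group to the model group. -/
def phiM (hupper : ∀ t i j, ¬ i < j → lam t i j = 0) : Tau2Group n m lam →* MG n m lam :=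
  PresentedGroup.toGroup (hrel hupper)

theorem phiM_a (i : Fin n) : phiM (lam := lam) hupper (tau2a i) = MG.ag i :=
  PresentedGroup.toGroup.of _

theorem phiM_c (t : Fin m) : phiM (lam := lam) hupper (tau2c t) = MG.cg t :=
  PresentedGroup.toGroup.of _

theorem rel_one (r : FreeGroup (Fin n ⊕ Fin m)) (hr : r ∈ tau2Rels n m lam) :
    PresentedGroup.mk (tau2Rels n m lam) r = 1 :=
  (QuotientGroup.eq_one_iff r).2 (Subgroup.subset_normalClosure hr)

theorem comm_rel {i j : Fin n} (hij : i < j) :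
    ⁅(tau2a i : Tau2Group n m lam), (tau2a j : Tau2Group n m lam)⁆
      = prodPow tau2c (fun t => lam t i j) := by
  have h := rel_one (lam := lam) _ (Or.inl ⟨i, j, hij, rfl⟩)
  rw [map_mul, map_inv, map_commutatorElement, prodPow_map, mul_inv_eq_one] at h
  exact h

theorem a_c_comm (i : Fin n) (t : Fin m) :
    Commute (tau2a i : Tau2Group n m lam) (tau2c t) := by
  have h := rel_one (lam := lam) _ (Or.inr (Or.inl ⟨i, t, rfl⟩))
  rw [map_commutatorElement] at h
  exact commutatorElement_eq_one_iff_commute.1 h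

theorem c_c_comm (t s : Fin m) :
    Commute (tau2c t : Tau2Group n m lam) (tau2c s) := by
  have h := rel_one (lam := lam) _ (Or.inr (Or.inr ⟨t, s, rfl⟩))
  rw [map_commutatorElement] at h
  exact commutatorElement_eq_one_iff_commute.1 h

theorem c_mem_center (t : Fin m) : (tau2c t : Tau2Group n m lam) ∈ Subgroup.center _ := by
  rw [Subgroup.mem_center_iff]
  intro g
  have hg : g ∈ Subgroup.closure (Set.range (PresentedGroup.of :
      (Fin n ⊕ Fin m) → Tau2Group n m lam)) := by
    rw [PresentedGroup.closure_range_of]; trivial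
  induction hg using Subgroup.closure_induction with
  | mem x hx =>
    obtain ⟨y, rfl⟩ := hx
    cases y with
    | inl i => exact a_c_comm i t
    | inr s => exact c_c_comm s t
  | one => exact Commute.one_left _
  | mul x y hx hy ihx ihy => exact Commute.mul_left ihx ihy
  | inv x hx ih => exact Commute.inv_left ih

/-- The subgroup generated by the `c`'s. -/
def Zc (n m : ℕ) (lam : Fin m → Fin n → Fin n → ℤ) : Subgroup (Tau2Group n m lam) :=
  Subgroup.closure (Set.range tau2c)

theorem Zc_le_center : Zc n m lam ≤ Subgroup.center _ :=
  (Subgroup.closure_le _).2 (by rintro x ⟨t, rfl⟩; exact c_mem_center t)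

theorem prodPow_mem {G : Type*} [Group G] (S : Subgroup G) {k : ℕ} (v : Fin k → G)
    (hv : ∀ i, v i ∈ S) (e : Fin k → ℤ) : prodPow v e ∈ S := by
  apply Subgroup.list_prod_mem
  intro x hx
  rw [List.mem_ofFn] at hx
  obtain ⟨i, rfl⟩ := hx
  exact zpow_mem (hv i) _

theorem prodPow_c_mem_Zc (e : Fin m → ℤ) :
    prodPow (tau2c : Fin m → Tau2Group n m lam) e ∈ Zc n m lam :=
  prodPow_mem _ _ (fun t => Subgroup.subset_closure (Set.mem_range_self t)) e

theorem a_swap (i j : Fin n) :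
    ∃ z ∈ Zc n m lam, (tau2a j : Tau2Group n m lam) * tau2a i = z * (tau2a i * tau2a j) := by
  rcases lt_trichotomy i j with h | h | h
  · refine ⟨(prodPow tau2c (fun t => lam t i j))⁻¹, inv_mem (prodPow_c_mem_Zc _), ?_⟩
    have h1 := comm_rel (lam := lam) h
    rw [commutatorElement_def] at h1
    rw [← h1]; group
  · subst h; exact ⟨1, one_mem _, by rw [one_mul]⟩
  · refine ⟨prodPow tau2c (fun t => lam t j i), prodPow_c_mem_Zc _, ?_⟩
    have h1 := comm_rel (lam := lam) h
    rw [commutatorElement_def] at h1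
    rw [← h1]; group

/-- Normal form: every element is `prodPow a v * z` with `z` in the `c`-subgroup. -/
theorem normal_form (g : Tau2Group n m lam) :
    ∃ (v : Fin n → ℤ) (z : Tau2Group n m lam), z ∈ Zc n m lam
      ∧ g = prodPow tau2a v * z := by
  have hg : g ∈ Subgroup.closure (Set.range (PresentedGroup.of :
      (Fin n ⊕ Fin m) → Tau2Group n m lam)) := by
    rw [PresentedGroup.closure_range_of]; trivial
  induction hg using Subgroup.closure_induction_left with
  | one => exact ⟨0, 1, one_mem _, by rw [prodPow_zero, one_mul]; rfl⟩
  | mul_left x hx y hy ih =>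
    obtain ⟨v, z, hz, rfl⟩ := ih
    obtain ⟨w, rfl⟩ := hx
    cases w with
    | inl i =>
      obtain ⟨z', hz', h⟩ := mul_prodPow tau2a (Zc n m lam) Zc_le_center a_swap i v
      refine ⟨v + Pi.single i 1, z' * z, mul_mem hz' hz, ?_⟩
      show tau2a i * (prodPow tau2a v * z) = _
      exact (show tau2a i * (prodPow tau2a v * z) = prodPow tau2a (v + Pi.single i 1) * (z' * z) from by
        exact (mul_assoc (tau2a i) (prodPow tau2a v) z).symm.trans
          ((congrArg (· * z) h).trans (mul_assoc _ _ _)))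
    | inr t =>
      refine ⟨v, tau2c t * z, mul_mem (Subgroup.subset_closure ⟨t, rfl⟩) hz, ?_⟩
      show tau2c t * (prodPow tau2a v * z) = _
      exact (show tau2c t * (prodPow tau2a v * z) = prodPow tau2a v * (tau2c t * z) from by
        exact (mul_assoc (tau2c t) (prodPow tau2a v) z).symm.trans
          ((congrArg (· * z) (Subgroup.mem_center_iff.1 (c_mem_center t) (prodPow tau2a v)).symm).trans
            (mul_assoc _ _ _)))
  | inv_mul_cancel x hx y hy ih =>
    obtain ⟨v, z, hz, rfl⟩ := ih
    obtain ⟨w, rfl⟩ := hx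
    cases w with
    | inl i =>
      obtain ⟨z', hz', h⟩ := mul_prodPow tau2a (Zc n m lam) Zc_le_center a_swap i
        (v - Pi.single i 1)
      rw [sub_add_cancel] at h
      refine ⟨v - Pi.single i 1, z'⁻¹ * z, mul_mem (inv_mem hz') hz, ?_⟩
      show (tau2a i)⁻¹ * (prodPow tau2a v * z) = _
      have h2 : prodPow tau2a (v - Pi.single i 1) = (tau2a i)⁻¹ * (prodPow tau2a v * z') := by
        rw [← h]; group
      exact (show (tau2a i)⁻¹ * (prodPow tau2a v * z) = prodPow tau2a (v - Pi.single i 1) * (z'⁻¹ * z) from by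
        rw [h2, mul_assoc ((tau2a i)⁻¹) (prodPow tau2a v * z') (z'⁻¹ * z),
          mul_assoc (prodPow tau2a v) z' (z'⁻¹ * z), mul_inv_cancel_left z' z]; exact rfl)
    | inr t =>
      refine ⟨v, (tau2c t)⁻¹ * z, mul_mem (inv_mem (Subgroup.subset_closure ⟨t, rfl⟩)) hz, ?_⟩
      show (tau2c t)⁻¹ * (prodPow tau2a v * z) = _
      have hcen : (tau2c t)⁻¹ ∈ Subgroup.center (Tau2Group n m lam) :=
        inv_mem (c_mem_center t)
      exact (show (tau2c t)⁻¹ * (prodPow tau2a v * z) = prodPow tau2a v * ((tau2c t)⁻¹ * z) from by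
        exact (mul_assoc ((tau2c t)⁻¹) (prodPow tau2a v) z).symm.trans
          ((congrArg (· * z) (Subgroup.mem_center_iff.1 hcen (prodPow tau2a v)).symm).trans
            (mul_assoc _ _ _)))

end G


end Tau2Aux
namespace Tau2Aux

section Props

variable {n m : ℕ} {lam : Fin m → Fin n → Fin n → ℤ}

theorem piv_apply {x : MG n m lam} : MG.piv x = Multiplicative.ofAdd x.v := rfl

theorem v_of_comm (hupper : ∀ t i j, ¬ i < j → lam t i j = 0) {k : Fin n}
    {x : Tau2Group n m lam} (hcomm : tau2a k * x = x * tau2a k)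
    {v : Fin n → ℤ} {z : Tau2Group n m lam} (hz : z ∈ Zc n m lam)
    (hx : x = prodPow tau2a v * z) :
    ∀ t, ∑ i, v i * (lam t i k - lam t k i) = 0 := by
  set φ := phiM (lam := lam) hupper with hφ
  have hz1 : MG.piv (φ z) = 1 := by
    have hle : Zc n m lam ≤ (MG.piv.comp φ).ker := by
      rw [Zc, Subgroup.closure_le]
      rintro _ ⟨t, rfl⟩
      show MG.piv (φ (tau2c t)) = 1
      rw [hφ, phiM_c]
      rfl
    exact hle hz
  have h2 : MG.piv (φ (prodPow tau2a v)) = Multiplicative.ofAdd v := by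
    rw [prodPow_map φ, prodPow_map MG.piv]
    have he : (fun i => MG.piv (φ (tau2a i)))
        = fun i => Multiplicative.ofAdd (Pi.single i (1:ℤ)) := by
      funext i; rw [hφ, phiM_a]; rfl
    rw [he, MG.prodPow_mult', MG.sum_single_eq']
  have h3 : (φ x).v = v := by
    have : MG.piv (φ x) = Multiplicative.ofAdd v := by
      rw [hx, map_mul, map_mul, h2, hz1, mul_one]
    have h4 := congrArg Multiplicative.toAdd this
    rwa [piv_apply] at h4
  have hM := congrArg φ hcomm
  rw [map_mul, map_mul, hφ, phiM_a, MG.mul_def, MG.mul_def] at hM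
  have hw := congrArg MG.w hM
  simp only at hw
  -- hw : (ag k).w + (φ x).w + Bf lam (ag k).v (φ x).v = (φ x).w + (ag k).w + Bf ...
  have hagv : (MG.ag k : MG n m lam).v = Pi.single k 1 := rfl
  have hagw : (MG.ag k : MG n m lam).w = 0 := rfl
  rw [hagv, hagw, h3] at hw
  have hB : Bf lam (Pi.single k 1) v = Bf lam v (Pi.single k 1) := by
    have := hw
    abel_nf at this
    linear_combination (norm := abel_nf) this
  intro t
  have hBt := congrFun hB t
  simp only [Bf_single_left, Bf_single_right] at hBt
  have : ∑ i, v i * (lam t i k - lam t k i)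
      = (∑ i, lam t i k * v i) - (∑ j, lam t k j * v j) := by
    rw [← Finset.sum_sub_distrib]
    apply Finset.sum_congr rfl
    intro i _
    ring
  rw [this, hBt, sub_self]

theorem lam_ne_zero (hupper : ∀ t i j, ¬ i < j → lam t i j = 0)
    (hker : ∀ (k : Fin n) (v : Fin n → ℤ),
      (∀ t, ∑ i, v i * (lam t i k - lam t k i) = 0) → v = Pi.single k (v k))
    {i j : Fin n} (hij : i < j) : ∃ t, lam t i j ≠ 0 := by
  by_contra hzero
  push_neg at hzero
  have hcond : ∀ t, ∑ p, (Pi.single i (1:ℤ) : Fin n → ℤ) p * (lam t p j - lam t j p) = 0 := by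
    intro t
    have : ∀ p, (Pi.single i (1:ℤ) : Fin n → ℤ) p * (lam t p j - lam t j p)
        = if p = i then (lam t p j - lam t j p) else 0 := by
      intro p
      simp [Pi.single_apply, ite_mul]
    rw [Finset.sum_congr rfl fun p _ => this p, Finset.sum_ite_eq' Finset.univ]
    simp only [Finset.mem_univ, if_true]
    simp [hzero t, hupper t j i (lt_asymm hij)]
  have h := hker j _ hcond
  have h2 := congrFun h i
  have hne : i ≠ j := ne_of_lt hij
  rw [Pi.single_apply, Pi.single_apply] at h2
  simp [hne, hne.symm] at h2

theorem tau2_props (hn : 2 ≤ n) (hupper : ∀ t i j, ¬ i < j → lam t i j = 0)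
    (hker : ∀ (k : Fin n) (v : Fin n → ℤ),
      (∀ t, ∑ i, v i * (lam t i k - lam t k i) = 0) → v = Pi.single k (v k)) :
    Subgroup.center (Tau2Group n m lam) = Subgroup.closure (Set.range tau2c)
    ∧ (∀ k : Fin n, IsCSmall (tau2a (lam := lam) k))
    ∧ (∀ i j : Fin n, i < j → ⁅(tau2a i : Tau2Group n m lam), (tau2a j : Tau2Group n m lam)⁆ ≠ 1) := by
  refine ⟨le_antisymm ?_ Zc_le_center, fun k => ?_, fun i j hij hone => ?_⟩
  · -- center ≤ Zc
    intro g hg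
    obtain ⟨v, z, hz, rfl⟩ := normal_form g
    have hk : ∀ k : Fin n, v = Pi.single k (v k) := by
      intro k
      exact hker k v (v_of_comm hupper (Subgroup.mem_center_iff.1 hg (tau2a k)) hz rfl)
    have k0 : Fin n := ⟨0, by omega⟩
    have hv0 : v = 0 := by
      funext i
      by_cases hi : i = (⟨0, by omega⟩ : Fin n)
      · have := congrFun (hk ⟨1, by omega⟩) i
        rw [this, Pi.single_apply]
        have : i ≠ (⟨1, by omega⟩ : Fin n) := by
          rw [hi]; simp [Fin.ext_iff]
        simp [this]
      · have := congrFun (hk ⟨0, by omega⟩) i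
        rw [this, Pi.single_apply]
        simp [hi]
    rw [hv0, prodPow_zero, one_mul]
    exact hz
  · -- c-small
    intro x
    constructor
    · intro hx
      have hcomm : tau2a k * x = x * tau2a k :=
        Subgroup.mem_centralizer_iff.1 hx (tau2a k) rfl
      obtain ⟨v, z, hz, rfl⟩ := normal_form x
      have hv := hker k v (v_of_comm hupper hcomm hz rfl)
      refine ⟨v k, z, Zc_le_center hz, ?_⟩
      have hPv : prodPow tau2a v = (tau2a (lam := lam) k) ^ (v k) := by
        conv_lhs => rw [hv]
        exact prodPow_single _ _ _
      rw [hPv]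
    · rintro ⟨s, z, hzc, rfl⟩
      rw [Subgroup.mem_centralizer_iff]
      rintro h rfl
      have c1 : Commute (tau2a (lam := lam) k) (tau2a k ^ s) := (Commute.refl _).zpow_right s
      have c2 : Commute (tau2a (lam := lam) k) z := Subgroup.mem_center_iff.1 hzc (tau2a k)
      exact (c1.mul_right c2).eq
  · -- commutators nontrivial
    obtain ⟨t0, ht0⟩ := lam_ne_zero hupper hker hij
    rw [comm_rel hij] at hone
    have h2 := congrArg (phiM (lam := lam) hupper) hone
    rw [prodPow_map, map_one] at h2
    have he : (fun t => phiM (lam := lam) hupper (tau2c t)) = (MG.cg : Fin m → MG n m lam) := by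
      funext t; exact phiM_c hupper t
    rw [he, MG.prodPow_cg, MG.one_def] at h2
    have h3 := congrArg MG.w h2
    simp only at h3
    exact ht0 (congrFun h3 t0)

end Props

end Tau2Aux
namespace Tau2Aux

section LinAlg

variable {n m : ℕ}

/-- Embedding of `Fin (n-1)` into `Fin n` avoiding `k`. -/
def emb (hn : 2 ≤ n) (k : Fin n) (r : Fin (n-1)) : Fin n :=
  if (r : ℕ) < (k : ℕ) then ⟨r, by omega⟩ else ⟨r + 1, by have := r.isLt; omega⟩

theorem emb_ne (hn : 2 ≤ n) (k : Fin n) (r : Fin (n-1)) : emb hn k r ≠ k := by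
  rw [emb]
  split <;> (intro h; rw [Fin.ext_iff] at h; simp at h; omega)

theorem emb_inj (hn : 2 ≤ n) (k : Fin n) : Function.Injective (emb hn k) := by
  intro r s h
  rw [emb, emb] at h
  rw [Fin.ext_iff]
  split at h <;> split at h <;> (rw [Fin.ext_iff] at h; simp at h ⊢ <;> omega) <;> omega

theorem emb_surj (hn : 2 ≤ n) (k : Fin n) (i : Fin n) (hik : i ≠ k) :
    ∃ r, emb hn k r = i := by
  have hkn : (k : ℕ) < n := k.isLt
  have hin : (i : ℕ) < n := i.isLt
  have hik' : (i : ℕ) ≠ (k : ℕ) := fun h => hik (Fin.ext h)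
  by_cases h : (i : ℕ) < (k : ℕ)
  · refine ⟨⟨i, by omega⟩, ?_⟩
    rw [emb]
    simp only [h, if_true]
  · refine ⟨⟨i - 1, by omega⟩, ?_⟩
    rw [emb]
    have : ¬ ((i : ℕ) - 1 < (k : ℕ)) := by omega
    simp only [this, if_false]
    rw [Fin.ext_iff]
    simp
    omega

/-- index of column `c` inside `Fin m`, using `n - 1 ≤ m`. -/
def tauc (hm : n - 1 ≤ m) (c : Fin (n-1)) : Fin m :=
  ⟨c, lt_of_lt_of_le c.isLt hm⟩

/-- The `(n-1) × (n-1)` matrix of commutator coefficients against `a_k`. -/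
def Dmat (hn : 2 ≤ n) (hm : n - 1 ≤ m) (lam : Fin m → Fin n → Fin n → ℤ) (k : Fin n) :
    Matrix (Fin (n-1)) (Fin (n-1)) ℤ :=
  Matrix.of fun r c => lam (tauc hm c) (emb hn k r) k - lam (tauc hm c) k (emb hn k r)

theorem good_implies_hker (hn : 2 ≤ n) (hm : n - 1 ≤ m)
    (lam : Fin m → Fin n → Fin n → ℤ) (hdiag : ∀ t k, lam t k k = 0)
    (hgood : ∀ k, (Dmat hn hm lam k).det ≠ 0) :
    ∀ (k : Fin n) (v : Fin n → ℤ),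
      (∀ t, ∑ i, v i * (lam t i k - lam t k i) = 0) → v = Pi.single k (v k) := by
  intro k v hcond
  set u : Fin (n-1) → ℤ := fun r => v (emb hn k r) with hu
  have hvm : Matrix.vecMul u (Dmat hn hm lam k) = 0 := by
    funext c
    rw [Matrix.vecMul, dotProduct]
    have hre : ∑ r, u r * Dmat hn hm lam k r c
        = ∑ i ∈ Finset.univ.erase k, v i * (lam (tauc hm c) i k - lam (tauc hm c) k i) := by
      apply Finset.sum_bij (fun r _ => emb hn k r)
      · intro r _; exact Finset.mem_erase.2 ⟨emb_ne hn k r, Finset.mem_univ _⟩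
      · intro r _ s _ h; exact emb_inj hn k h
      · intro i hi
        obtain ⟨r, hr⟩ := emb_surj hn k i (Finset.mem_erase.1 hi).1
        exact ⟨r, Finset.mem_univ _, hr⟩
      · intro r _; rfl
    rw [hre]
    have hfull : ∑ i ∈ Finset.univ.erase k, v i * (lam (tauc hm c) i k - lam (tauc hm c) k i)
        = ∑ i, v i * (lam (tauc hm c) i k - lam (tauc hm c) k i) := by
      rw [← Finset.sum_erase_add _ _ (Finset.mem_univ k)]
      simp [hdiag]
    rw [hfull]
    exact hcond (tauc hm c)
  have hu0 : u = 0 := Matrix.eq_zero_of_vecMul_eq_zero (hgood k) hvm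
  funext i
  by_cases hik : i = k
  · subst hik; simp
  · obtain ⟨r, hr⟩ := emb_surj hn k i hik
    have hv0 : v i = 0 := by rw [← hr]; simpa using congrFun hu0 r
    rw [Pi.single_apply]
    simp [hik, hv0]

end LinAlg

end Tau2Aux
namespace Tau2Aux

section Counting

variable {ι : Type*} [Fintype ι] [DecidableEq ι]

/-- The box of integer vectors with entries bounded by `ℓ`. -/
def boxSet (ι : Type*) [Fintype ι] (ℓ : ℕ) : Set (ι → ℤ) := {x | ∀ i, |x i| ≤ (ℓ:ℤ)}

theorem boxSet_eq (ℓ : ℕ) :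
    boxSet ι ℓ = ↑(Fintype.piFinset (fun _ : ι => Finset.Icc (-(ℓ:ℤ)) ℓ)) := by
  ext x
  simp only [boxSet, Set.mem_setOf_eq, Finset.mem_coe, Fintype.mem_piFinset, Finset.mem_Icc,
    abs_le]

theorem boxSet_finite (ℓ : ℕ) : (boxSet ι ℓ).Finite := by
  rw [boxSet_eq]; exact (Fintype.piFinset _).finite_toSet

theorem card_Icc_int (ℓ : ℕ) : (Finset.Icc (-(ℓ:ℤ)) ℓ).card = 2*ℓ+1 := by
  rw [Int.card_Icc]
  omega

theorem ncard_boxSet (ℓ : ℕ) : (boxSet ι ℓ).ncard = (2*ℓ+1)^(Fintype.card ι) := by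
  rw [boxSet_eq, Set.ncard_coe_finset, Fintype.card_piFinset,
    Finset.prod_congr rfl (fun (i : ι) _ => card_Icc_int ℓ), Finset.prod_const,
    Finset.card_univ]

theorem ncard_graph_le (ℓ : ℕ) (S : Set (ι → ℤ)) (i₀ : ι) (hS : S ⊆ boxSet ι ℓ)
    (hinj : ∀ x ∈ S, ∀ y ∈ S, (∀ i, i ≠ i₀ → x i = y i) → x = y) :
    S.ncard ≤ (2*ℓ+1)^(Fintype.card ι - 1) := by
  classical
  set box' : Finset (ι → ℤ) :=
    Fintype.piFinset (fun i => if i = i₀ then ({0} : Finset ℤ) else Finset.Icc (-(ℓ:ℤ)) ℓ)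
    with hbox'
  have hmap : ∀ x ∈ S, Function.update x i₀ 0 ∈ box' := by
    intro x hx
    rw [hbox', Fintype.mem_piFinset]
    intro i
    by_cases hi : i = i₀
    · subst hi; simp [Function.update_self]
    · simp only [hi, if_false, Function.update_of_ne hi]
      rw [Finset.mem_Icc, ← abs_le]
      exact hS hx i
  have hinj' : Set.InjOn (fun x => Function.update x i₀ 0) S := by
    intro x hx y hy hxy
    refine hinj x hx y hy fun i hi => ?_
    have h := congrFun hxy i
    simp only [Function.update_of_ne hi] at h
    exact h
  have h1 : S.ncard = ((fun x => Function.update x i₀ 0) '' S).ncard :=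
    (Set.ncard_image_of_injOn hinj').symm
  have h2 : ((fun x => Function.update x i₀ 0) '' S).ncard ≤ (box' : Set (ι → ℤ)).ncard := by
    apply Set.ncard_le_ncard
    · rintro _ ⟨x, hx, rfl⟩; exact hmap x hx
    · exact box'.finite_toSet
  have h3 : (box' : Set (ι → ℤ)).ncard = (2*ℓ+1)^(Fintype.card ι - 1) := by
    rw [Set.ncard_coe_finset, Fintype.card_piFinset]
    rw [← Finset.mul_prod_erase Finset.univ _ (Finset.mem_univ i₀)]
    rw [if_pos rfl]
    have : ∀ i ∈ Finset.univ.erase i₀,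
        (if i = i₀ then ({0} : Finset ℤ) else Finset.Icc (-(ℓ:ℤ)) ℓ).card = 2*ℓ+1 := by
      intro i hi
      rw [if_neg (Finset.mem_erase.1 hi).1, card_Icc_int]
    rw [Finset.prod_congr rfl this, Finset.prod_const, Finset.card_erase_of_mem (Finset.mem_univ _),
      Finset.card_univ]
    simp
  omega

theorem countDet (ℓ : ℕ) :
    ∀ (d : ℕ) (act : Fin d × Fin d → ι), Function.Injective act →
    Set.ncard {x : ι → ℤ | x ∈ boxSet ι ℓ ∧ (Matrix.of fun r c => x (act (r,c))).det = 0}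
      ≤ d * (2*ℓ+1)^(Fintype.card ι - 1) := by
  intro d
  induction d with
  | zero =>
    intro act _
    have : {x : ι → ℤ | x ∈ boxSet ι ℓ ∧ (Matrix.of fun r c => x (act (r,c))).det = 0} = ∅ := by
      ext x; simp [Matrix.det_fin_zero]
    rw [this]
    simp
  | succ d ih =>
    intro act hact
    set A : (ι → ℤ) → Matrix (Fin (d+1)) (Fin (d+1)) ℤ :=
      fun x => Matrix.of fun r c => x (act (r,c)) with hA
    set act' : Fin d × Fin d → ι := fun p => act (p.1.succ, p.2.succ) with hact'
    have hact'inj : Function.Injective act' := by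
      intro p q h
      have := hact h
      have h1 : p.1.succ = q.1.succ := congrArg Prod.fst this
      have h2 : p.2.succ = q.2.succ := congrArg Prod.snd this
      exact Prod.ext (Fin.succ_injective _ h1) (Fin.succ_injective _ h2)
    set i₀ : ι := act (0, 0) with hi₀
    set B1 : Set (ι → ℤ) :=
      {x | x ∈ boxSet ι ℓ ∧ (Matrix.of fun r c => x (act' (r,c))).det = 0} with hB1
    set B2 : Set (ι → ℤ) :=
      {x | (x ∈ boxSet ι ℓ ∧ (A x).det = 0)
        ∧ (Matrix.of fun r c => x (act' (r,c))).det ≠ 0} with hB2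
    -- submatrix identification
    have hsub : ∀ x : ι → ℤ, (A x).submatrix ((0 : Fin (d+1)).succAbove) Fin.succ
        = Matrix.of fun r c => x (act' (r,c)) := by
      intro x
      ext r c
      simp [hA, hact', Matrix.submatrix_apply, Fin.succAbove_zero]
    -- Laplace expansion bookkeeping
    set Srest : (ι → ℤ) → ℤ := fun x => ∑ i ∈ Finset.univ.erase (0 : Fin (d+1)),
      (-1)^(i:ℕ) * x (act (i,0)) * ((A x).submatrix i.succAbove Fin.succ).det with hSrest
    have expand : ∀ x : ι → ℤ, (A x).det
        = Srest x + x i₀ * ((A x).submatrix ((0:Fin (d+1)).succAbove) Fin.succ).det := by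
      intro x
      rw [Matrix.det_succ_column_zero]
      rw [← Finset.sum_erase_add _ _ (Finset.mem_univ (0 : Fin (d+1)))]
      congr 1
      simp [hA, hi₀]
    -- invariance under change of the i₀ coordinate
    have hagree : ∀ x y : ι → ℤ, (∀ i, i ≠ i₀ → x i = y i) →
        Srest x = Srest y ∧
        ∀ i : Fin (d+1), ((A x).submatrix i.succAbove Fin.succ)
          = ((A y).submatrix i.succAbove Fin.succ) := by
      intro x y hxy
      have hAsub : ∀ i : Fin (d+1), ((A x).submatrix i.succAbove Fin.succ)
          = ((A y).submatrix i.succAbove Fin.succ) := by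
        intro i
        ext r c
        simp only [Matrix.submatrix_apply, hA, Matrix.of_apply]
        apply hxy
        intro hcontra
        have := hact hcontra
        have h2 : c.succ = (0 : Fin (d+1)) := congrArg Prod.snd this
        exact Fin.succ_ne_zero c h2
      refine ⟨?_, hAsub⟩
      apply Finset.sum_congr rfl
      intro i hi
      rw [hAsub i]
      have hxi : x (act (i, 0)) = y (act (i, 0)) := by
        apply hxy
        intro hcontra
        have := hact hcontra
        have h2 : i = (0 : Fin (d+1)) := congrArg Prod.fst this
        exact (Finset.mem_erase.1 hi).1 h2
      rw [hxi]
    -- split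
    have hsplit : {x : ι → ℤ | x ∈ boxSet ι ℓ ∧ (A x).det = 0} ⊆ B1 ∪ B2 := by
      intro x hx
      by_cases hd : (Matrix.of fun r c => x (act' (r,c))).det = 0
      · exact Or.inl ⟨hx.1, hd⟩
      · exact Or.inr ⟨hx, hd⟩
    have hfin1 : B1.Finite := (boxSet_finite ℓ).subset (fun x hx => hx.1)
    have hfin2 : B2.Finite := (boxSet_finite ℓ).subset (fun x hx => hx.1.1)
    have hle : ({x : ι → ℤ | x ∈ boxSet ι ℓ ∧ (A x).det = 0}).ncard
        ≤ B1.ncard + B2.ncard := by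
      calc ({x : ι → ℤ | x ∈ boxSet ι ℓ ∧ (A x).det = 0}).ncard
          ≤ (B1 ∪ B2).ncard := Set.ncard_le_ncard hsplit (hfin1.union hfin2)
        _ ≤ B1.ncard + B2.ncard := Set.ncard_union_le _ _
    have hb1 : B1.ncard ≤ d * (2*ℓ+1)^(Fintype.card ι - 1) := ih act' hact'inj
    have hb2 : B2.ncard ≤ (2*ℓ+1)^(Fintype.card ι - 1) := by
      apply ncard_graph_le ℓ B2 i₀ (fun x hx => hx.1.1)
      intro x hx y hy hxy
      obtain ⟨hSeq, hsubeq⟩ := hagree x y hxy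
      have hdetx := hx.1.2
      have hdety := hy.1.2
      rw [expand x] at hdetx
      rw [expand y] at hdety
      rw [hSeq, hsubeq 0] at hdetx
      have hkey : (x i₀ - y i₀) * ((A y).submatrix ((0:Fin (d+1)).succAbove) Fin.succ).det
          = 0 := by
        have := hdetx.trans hdety.symm
        ring_nf at this ⊢
        linarith [this]
      have hne : ((A y).submatrix ((0:Fin (d+1)).succAbove) Fin.succ).det ≠ 0 := by
        rw [hsub y]
        exact hy.2
      have hxy0 : x i₀ = y i₀ := by
        rcases mul_eq_zero.1 hkey with h | h
        · linarith [h]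
        · exact absurd h hne
      funext i
      by_cases hi : i = i₀
      · rw [hi]; exact hxy0
      · exact hxy i hi
    calc Set.ncard {x : ι → ℤ | x ∈ boxSet ι ℓ ∧ (A x).det = 0}
        ≤ B1.ncard + B2.ncard := hle
      _ ≤ d * (2*ℓ+1)^(Fintype.card ι - 1) + (2*ℓ+1)^(Fintype.card ι - 1) :=
          Nat.add_le_add hb1 hb2
      _ = (d+1) * (2*ℓ+1)^(Fintype.card ι - 1) := by ring

end Counting

end Tau2Aux
namespace Tau2Aux

theorem ncard_iUnion_le_sum {α : Type*} {N : ℕ} (S : Fin N → Set α)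
    (hS : ∀ k, (S k).Finite) : (⋃ k, S k).ncard ≤ ∑ k, (S k).ncard := by
  classical
  have h1 : (⋃ k, S k) = ↑(Finset.univ.biUnion (fun k => (hS k).toFinset)) := by
    ext x
    simp [Set.Finite.mem_toFinset]
  rw [h1, Set.ncard_coe_finset]
  calc (Finset.univ.biUnion (fun k => (hS k).toFinset)).card
      ≤ ∑ k, ((hS k).toFinset).card := Finset.card_biUnion_le
    _ = ∑ k, (S k).ncard := by
        apply Finset.sum_congr rfl
        intro k _
        rw [← Set.ncard_coe_finset ((hS k).toFinset), Set.Finite.coe_toFinset]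

theorem card_pairIdx (n : ℕ) (hn : 2 ≤ n) :
    Fintype.card {p : Fin n × Fin n // p.1 < p.2} = n * (n - 1) / 2 := by
  classical
  obtain ⟨n', rfl⟩ : ∃ n', n = n' + 1 := ⟨n - 1, by omega⟩
  set N := n' + 1
  have hcard : Fintype.card {p : Fin N × Fin N // p.1 < p.2}
      = (Finset.univ.filter (fun p : Fin N × Fin N => p.1 < p.2)).card :=
    Fintype.card_subtype _
  set a := (Finset.univ.filter (fun p : Fin N × Fin N => p.1 < p.2)).card with ha
  -- the "greater" part has the same cardinality via swapping
  have hswap : (Finset.univ.filter (fun p : Fin N × Fin N => p.2 < p.1)).card = a := by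
    rw [ha]
    apply Finset.card_bij (fun p _ => (p.2, p.1))
    · intro p hp
      simp only [Finset.mem_filter, Finset.mem_univ, true_and] at hp ⊢
      exact hp
    · intro p hp q hq h
      have h1 := congrArg Prod.fst h
      have h2 := congrArg Prod.snd h
      simp only at h1 h2
      exact Prod.ext h2 h1
    · intro p hp
      simp only [Finset.mem_filter, Finset.mem_univ, true_and] at hp ⊢
      exact ⟨(p.2, p.1), by simpa using hp, rfl⟩
  -- the diagonal
  have hdiag : (Finset.univ.filter (fun p : Fin N × Fin N => p.1 = p.2)).card = N := by
    have hd : (Finset.univ.filter (fun p : Fin N × Fin N => p.1 = p.2)).card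
        = (Finset.univ : Finset (Fin N)).card := by
      apply Finset.card_bij (fun p _ => p.1)
      · intro p _; exact Finset.mem_univ _
      · intro p hp q hq h
        simp only [Finset.mem_filter, Finset.mem_univ, true_and] at hp hq
        exact Prod.ext h (by rw [← hp, ← hq]; exact h)
      · intro i _
        exact ⟨(i, i), by simp, rfl⟩
    rw [hd, Finset.card_univ, Fintype.card_fin]
  -- counting
  have htot : a + (Finset.univ.filter (fun p : Fin N × Fin N => ¬ p.1 < p.2)).card
      = N * N := by
    rw [ha, Finset.card_filter_add_card_filter_not]
    simp [Finset.card_univ]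
  have hsplit2 : (Finset.univ.filter (fun p : Fin N × Fin N => ¬ p.1 < p.2)).card
      = N + a := by
    have h2 : ((Finset.univ.filter (fun p : Fin N × Fin N => ¬ p.1 < p.2)).filter
          (fun p => p.1 = p.2)).card
        + ((Finset.univ.filter (fun p : Fin N × Fin N => ¬ p.1 < p.2)).filter
          (fun p => ¬ p.1 = p.2)).card
        = (Finset.univ.filter (fun p : Fin N × Fin N => ¬ p.1 < p.2)).card :=
      Finset.card_filter_add_card_filter_not _
    have he1 : (Finset.univ.filter (fun p : Fin N × Fin N => ¬ p.1 < p.2)).filter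
          (fun p => p.1 = p.2)
        = Finset.univ.filter (fun p : Fin N × Fin N => p.1 = p.2) := by
      rw [Finset.filter_filter]
      apply Finset.filter_congr
      intro p _
      constructor
      · exact fun h => h.2
      · intro h; exact ⟨by rw [h]; exact lt_irrefl _, h⟩
    have he2 : (Finset.univ.filter (fun p : Fin N × Fin N => ¬ p.1 < p.2)).filter
          (fun p => ¬ p.1 = p.2)
        = Finset.univ.filter (fun p : Fin N × Fin N => p.2 < p.1) := by
      rw [Finset.filter_filter]
      apply Finset.filter_congr
      intro p _
      constructor
      · intro h
        rcases lt_trichotomy p.1 p.2 with hh | hh | hh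
        · exact absurd hh h.1
        · exact absurd hh h.2
        · exact hh
      · intro h
        exact ⟨not_lt_of_gt h, ne_of_gt h⟩
    rw [← h2, he1, he2, hdiag, hswap]
  have hNN : N * N = N * n' + N := by ring
  have hfinal : 2 * a = N * n' := by omega
  rw [hcard]
  have : N - 1 = n' := by omega
  rw [this]
  omega

end Tau2Aux
namespace Tau2Aux

section Final

variable {n m : ℕ}

/-- pair index of `emb hn k r` and `k`. -/
def prIdx (hn : 2 ≤ n) (k : Fin n) (r : Fin (n-1)) : PairIdx n :=
  if h : emb hn k r < k then ⟨(emb hn k r, k), h⟩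
  else ⟨(k, emb hn k r), lt_of_le_of_ne (not_lt.1 h) (Ne.symm (emb_ne hn k r))⟩

def actk (hn : 2 ≤ n) (hm : n - 1 ≤ m) (k : Fin n) :
    Fin (n-1) × Fin (n-1) → Fin m × PairIdx n :=
  fun p => (tauc hm p.2, prIdx hn k p.1)

theorem prIdx_inj (hn : 2 ≤ n) (k : Fin n) : Function.Injective (prIdx hn k) := by
  intro r s h
  rw [prIdx, prIdx] at h
  apply emb_inj hn k
  split at h <;> split at h <;>
    (rw [Subtype.ext_iff] at h;
     first
      | exact congrArg Prod.fst h
      | exact congrArg Prod.snd h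
      | (exfalso; exact emb_ne hn k r (congrArg Prod.fst h))
      | (exfalso; exact emb_ne hn k s (congrArg Prod.fst h).symm))

theorem actk_inj (hn : 2 ≤ n) (hm : n - 1 ≤ m) (k : Fin n) :
    Function.Injective (actk hn hm k) := by
  intro p q h
  have h1 : tauc hm p.2 = tauc hm q.2 := congrArg Prod.fst h
  have h2 : prIdx hn k p.1 = prIdx hn k q.1 := congrArg Prod.snd h
  have e2 : p.2 = q.2 := by
    rw [tauc, tauc, Fin.ext_iff] at h1
    exact Fin.ext h1
  exact Prod.ext (prIdx_inj hn k h2) e2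

theorem dmat_entry (hn : 2 ≤ n) (hm : n - 1 ≤ m) (μ : Fin m → PairIdx n → ℤ) (k : Fin n) :
    Dmat hn hm (lamOf μ) k
      = Matrix.of fun r c => (if emb hn k r < k then (1:ℤ) else -1)
          * μ (tauc hm c) (prIdx hn k r) := by
  ext r c
  rw [Dmat, Matrix.of_apply, Matrix.of_apply, lamOf, lamOf, prIdx]
  by_cases h : emb hn k r < k
  · rw [dif_pos h, dif_neg (by omega : ¬ k < emb hn k r), dif_pos h]
    simp only [sub_zero]
    rw [if_pos h, one_mul]
  · have hk : k < emb hn k r := lt_of_le_of_ne (not_lt.1 h) (Ne.symm (emb_ne hn k r))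
    rw [dif_neg h, dif_pos hk, dif_neg h]
    simp only [zero_sub]
    rw [if_neg h, neg_one_mul]

theorem dmat_det_iff (hn : 2 ≤ n) (hm : n - 1 ≤ m) (μ : Fin m → PairIdx n → ℤ) (k : Fin n) :
    (Dmat hn hm (lamOf μ) k).det = 0
      ↔ (Matrix.of fun r c => (fun q : Fin m × PairIdx n => μ q.1 q.2)
          (actk hn hm k (r, c))).det = 0 := by
  rw [dmat_entry hn hm μ k]
  have heq : (Matrix.of fun r c => (if emb hn k r < k then (1:ℤ) else -1)
        * μ (tauc hm c) (prIdx hn k r))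
      = Matrix.of fun r c => (if emb hn k r < k then (1:ℤ) else -1)
        * (Matrix.of fun r c => (fun q : Fin m × PairIdx n => μ q.1 q.2)
            (actk hn hm k (r, c))) r c := rfl
  rw [heq, Matrix.det_mul_column]
  constructor
  · intro h
    rcases mul_eq_zero.1 h with h | h
    · exfalso
      refine (Finset.prod_ne_zero_iff.2 ?_) h
      intro r _
      split <;> norm_num
    · exact h
  · intro h; rw [h, mul_zero]

/-- The "uncurrying" map. -/
def unc : (Fin m → PairIdx n → ℤ) → ((Fin m × PairIdx n) → ℤ) :=
  fun μ q => μ q.1 q.2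

theorem unc_inj : Function.Injective (unc (n := n) (m := m)) := by
  intro μ ν h
  funext t p
  exact congrFun h (t, p)

theorem unc_image_box (ℓ : ℕ) (S : Set (Fin m → PairIdx n → ℤ))
    (hSdef : S = {μ | ∀ t p, |μ t p| ≤ (ℓ:ℤ)}) :
    unc '' S = boxSet (Fin m × PairIdx n) ℓ := by
  subst hSdef
  ext x
  constructor
  · rintro ⟨μ, hμ, rfl⟩
    intro q
    exact hμ q.1 q.2
  · intro hx
    exact ⟨fun t p => x (t, p), fun t p => hx (t, p), rfl⟩

end Final

end Tau2Aux

open Tau2Aux in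
/-- Fix n, m with m ≥ n−1 ≥ 1. Among the (2ℓ+1)^{m·n(n−1)/2} tuples
λ = (λ_{t,i,j}) with |λ_{t,i,j}| ≤ ℓ, the proportion of those for which the τ₂-presented
group G = G(n,m,λ) satisfies (i) Z(G) = ⟨c₁,…,cₘ⟩, (ii) every a_k is c-small, and
(iii) [aᵢ,aⱼ] ≠ 1 for all i < j, tends to 1 as ℓ → ∞. -/
theorem stmt14 (n m : ℕ) (hn : 2 ≤ n) (hm : n - 1 ≤ m) :
    Filter.Tendsto (fun ℓ : ℕ =>
      (Set.ncard {μ : Fin m → PairIdx n → ℤ |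
          (∀ t p, |μ t p| ≤ (ℓ : ℤ)) ∧
          (Subgroup.center (Tau2Group n m (lamOf μ)) =
              Subgroup.closure (Set.range (@tau2c n m (lamOf μ))) ∧
            (∀ k : Fin n, IsCSmall (@tau2a n m (lamOf μ) k)) ∧
            (∀ i j : Fin n, i < j →
              ⁅@tau2a n m (lamOf μ) i, @tau2a n m (lamOf μ) j⁆ ≠ 1))} : ℝ) /
        (2 * (ℓ : ℝ) + 1) ^ (m * (n * (n - 1) / 2)))
      Filter.atTop (nhds 1) := by
  classical
  set T : ℕ → Set (Fin m → PairIdx n → ℤ) := fun ℓ => {μ : Fin m → PairIdx n → ℤ |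
          (∀ t p, |μ t p| ≤ (ℓ : ℤ)) ∧
          (Subgroup.center (Tau2Group n m (lamOf μ)) =
              Subgroup.closure (Set.range (@tau2c n m (lamOf μ))) ∧
            (∀ k : Fin n, IsCSmall (@tau2a n m (lamOf μ) k)) ∧
            (∀ i j : Fin n, i < j →
              ⁅@tau2a n m (lamOf μ) i, @tau2a n m (lamOf μ) j⁆ ≠ 1))} with hT
  set E := Fintype.card (Fin m × PairIdx n) with hE
  have hEeq : E = m * (n * (n - 1) / 2) := by
    rw [hE, Fintype.card_prod, Fintype.card_fin, card_pairIdx n hn]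
  have hE1 : 1 ≤ E := by
    rw [hEeq]
    have h1 : 2 ≤ n * (n - 1) := by
      calc 2 = 2 * 1 := by norm_num
        _ ≤ n * (n - 1) := Nat.mul_le_mul hn (by omega)
    have h2 : 1 ≤ n * (n - 1) / 2 := by omega
    have h3 : 1 ≤ m := by omega
    calc 1 = 1 * 1 := by norm_num
      _ ≤ m * (n * (n - 1) / 2) := Nat.mul_le_mul h3 h2
  -- counting bounds
  have key : ∀ ℓ : ℕ, (T ℓ).ncard ≤ (2*ℓ+1)^E
      ∧ (2*ℓ+1)^E ≤ (T ℓ).ncard + (n * (n-1)) * (2*ℓ+1)^(E-1) := by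
    intro ℓ
    set Boxμ : Set (Fin m → PairIdx n → ℤ) :=
      {μ : Fin m → PairIdx n → ℤ | ∀ t p, |μ t p| ≤ (ℓ:ℤ)} with hBox
    have hBoxImg : unc '' Boxμ = boxSet (Fin m × PairIdx n) ℓ := unc_image_box ℓ _ rfl
    have hBoxCard : Boxμ.ncard = (2*ℓ+1)^E := by
      rw [← Set.ncard_image_of_injective _ unc_inj, hBoxImg, ncard_boxSet, hE]
    have hBoxFin : Boxμ.Finite := by
      apply Set.Finite.of_finite_image _ unc_inj.injOn
      rw [hBoxImg]
      exact boxSet_finite ℓ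
    set Bad : Fin n → Set (Fin m → PairIdx n → ℤ) := fun k =>
      {μ : Fin m → PairIdx n → ℤ | μ ∈ Boxμ ∧ (Dmat hn hm (lamOf μ) k).det = 0} with hBad
    have hBadFin : ∀ k, (Bad k).Finite := fun k => hBoxFin.subset (fun μ hμ => hμ.1)
    have hBadCard : ∀ k, (Bad k).ncard ≤ (n-1) * (2*ℓ+1)^(E-1) := by
      intro k
      have himg : unc '' (Bad k) = {x : (Fin m × PairIdx n) → ℤ |
          x ∈ boxSet (Fin m × PairIdx n) ℓ
          ∧ (Matrix.of fun r c => x (actk hn hm k (r,c))).det = 0} := by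
        ext x
        constructor
        · rintro ⟨μ, ⟨hμ1, hμ2⟩, rfl⟩
          exact ⟨fun q => hμ1 q.1 q.2, (dmat_det_iff hn hm μ k).1 hμ2⟩
        · rintro ⟨hx1, hx2⟩
          refine ⟨fun t p => x (t,p), ⟨fun t p => hx1 (t,p), ?_⟩, ?_⟩
          · exact (dmat_det_iff hn hm _ k).2 hx2
          · funext q
            show x (q.1, q.2) = x q
            rw [Prod.mk.eta]
      rw [← Set.ncard_image_of_injective _ unc_inj, himg, hE]
      exact countDet ℓ (n-1) (actk hn hm k) (actk_inj hn hm k)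
    have hTsub : T ℓ ⊆ Boxμ := fun μ hμ => hμ.1
    have hTFin : (T ℓ).Finite := hBoxFin.subset hTsub
    constructor
    · rw [← hBoxCard]
      exact Set.ncard_le_ncard hTsub hBoxFin
    · have hcover : Boxμ ⊆ T ℓ ∪ ⋃ k, Bad k := by
        intro μ hμ
        by_cases hgood : ∀ k, (Dmat hn hm (lamOf μ) k).det ≠ 0
        · left
          have hupper : ∀ t i j, ¬ i < j → lamOf μ t i j = 0 := fun t i j h => dif_neg h
          have hdiag : ∀ t k, lamOf μ t k k = 0 := fun t k => dif_neg (lt_irrefl k)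
          have hker := good_implies_hker hn hm (lamOf μ) hdiag hgood
          obtain ⟨h1, h2, h3⟩ := tau2_props hn hupper hker
          exact ⟨hμ, h1, h2, h3⟩
        · right
          push_neg at hgood
          obtain ⟨k, hk⟩ := hgood
          exact Set.mem_iUnion.2 ⟨k, hμ, hk⟩
      calc (2*ℓ+1)^E = Boxμ.ncard := hBoxCard.symm
        _ ≤ (T ℓ ∪ ⋃ k, Bad k).ncard :=
            Set.ncard_le_ncard hcover (hTFin.union (Set.finite_iUnion hBadFin))
        _ ≤ (T ℓ).ncard + (⋃ k, Bad k).ncard := Set.ncard_union_le _ _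
        _ ≤ (T ℓ).ncard + (n * (n-1)) * (2*ℓ+1)^(E-1) := by
            have hsum : (⋃ k, Bad k).ncard ≤ (n * (n-1)) * (2*ℓ+1)^(E-1) := by
              calc (⋃ k, Bad k).ncard ≤ ∑ k, (Bad k).ncard := ncard_iUnion_le_sum Bad hBadFin
                _ ≤ ∑ _k : Fin n, (n-1) * (2*ℓ+1)^(E-1) :=
                    Finset.sum_le_sum (fun k _ => hBadCard k)
                _ = (n * (n-1)) * (2*ℓ+1)^(E-1) := by
                    rw [Finset.sum_const, Finset.card_univ, Fintype.card_fin, smul_eq_mul]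
                    ring
            omega
  -- pass to real numbers
  simp only [← hEeq]
  set c : ℝ := ((n * (n-1) : ℕ) : ℝ) with hc
  have hc0 : 0 ≤ c := by positivity
  set f : ℕ → ℝ := fun ℓ => ((T ℓ).ncard : ℝ) / (2 * (ℓ:ℝ) + 1) ^ E with hf
  have hDpos : ∀ ℓ : ℕ, (0:ℝ) < 2 * (ℓ:ℝ) + 1 := by intro ℓ; positivity
  have hPpos : ∀ ℓ : ℕ, (0:ℝ) < (2 * (ℓ:ℝ) + 1) ^ E := by intro ℓ; positivity
  have hcastD : ∀ ℓ : ℕ, ((2*ℓ+1 : ℕ) : ℝ) = 2 * (ℓ:ℝ) + 1 := by intro ℓ; push_cast; ring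
  have hub : ∀ ℓ : ℕ, f ℓ ≤ 1 := by
    intro ℓ
    rw [hf]
    rw [div_le_one (hPpos ℓ)]
    have h1 := (key ℓ).1
    calc ((T ℓ).ncard : ℝ) ≤ (((2*ℓ+1)^E : ℕ) : ℝ) := by exact_mod_cast h1
      _ = (2 * (ℓ:ℝ) + 1)^E := by rw [Nat.cast_pow, hcastD]
  have hlb : ∀ ℓ : ℕ, 1 - c / (2 * (ℓ:ℝ) + 1) ≤ f ℓ := by
    intro ℓ
    have h2 := (key ℓ).2
    have h2r : (2 * (ℓ:ℝ) + 1)^E ≤ ((T ℓ).ncard : ℝ) + c * (2 * (ℓ:ℝ) + 1)^(E-1) := by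
      have := (Nat.cast_le (α := ℝ)).2 h2
      push_cast at this
      calc (2 * (ℓ:ℝ) + 1)^E = (((2*ℓ+1)^E : ℕ) : ℝ) := by rw [Nat.cast_pow, hcastD]
        _ ≤ ((T ℓ).ncard : ℝ) + c * (((2*ℓ+1)^(E-1) : ℕ) : ℝ) := by
            rw [hc]
            push_cast
            linarith [this]
        _ = ((T ℓ).ncard : ℝ) + c * (2 * (ℓ:ℝ) + 1)^(E-1) := by rw [Nat.cast_pow, hcastD]
    rw [hf, le_div_iff₀ (hPpos ℓ)]
    have hP : (2 * (ℓ:ℝ) + 1)^E = (2 * (ℓ:ℝ) + 1)^(E-1) * (2 * (ℓ:ℝ) + 1) := by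
      rw [← pow_succ]
      congr 1
      omega
    have hDne : (2 * (ℓ:ℝ) + 1) ≠ 0 := ne_of_gt (hDpos ℓ)
    have hexp : (1 - c / (2 * (ℓ:ℝ) + 1)) * (2 * (ℓ:ℝ) + 1)^E
        = (2 * (ℓ:ℝ) + 1)^E - c * (2 * (ℓ:ℝ) + 1)^(E-1) := by
      rw [hP]
      field_simp
    rw [hexp]
    linarith [h2r]
  -- limits
  have hg : Filter.Tendsto (fun ℓ : ℕ => 1 - c / (2 * (ℓ:ℝ) + 1)) Filter.atTop (nhds 1) := by
    have hden : Filter.Tendsto (fun ℓ : ℕ => 2 * (ℓ:ℝ) + 1) Filter.atTop Filter.atTop := by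
      apply Filter.tendsto_atTop_add_const_right
      exact (tendsto_natCast_atTop_atTop).const_mul_atTop (by norm_num)
    have hzero : Filter.Tendsto (fun ℓ : ℕ => c / (2 * (ℓ:ℝ) + 1)) Filter.atTop (nhds 0) :=
      Filter.Tendsto.div_atTop tendsto_const_nhds hden
    have := (tendsto_const_nhds (x := (1:ℝ)) (f := Filter.atTop (α := ℕ))).sub hzero
    simpa using this
  exact tendsto_of_tendsto_of_tendsto_of_le_of_le hg tendsto_const_nhds hlb hub
end

section
/- Fix integers n ≥ 2 and m ≥ 1 with m > n(n−1)/2. Then for EVERY integer tuple λ = (λ_{t,i,j})_{1≤t≤m, 1≤i<j≤n}, the τ₂-presented group G = G(n,m,λ) satisfies: the commutator subgroup G' has infinite index in ⟨C⟩ = ⟨c_1,…,c_m⟩, and G is not regular (Z(G) is not contained in Is(G')). -/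
open scoped commutatorElement

/-- A group is regular if Z(G) ≤ Is(G') = {g : gᵗ ∈ G' for some nonzero integer t}. -/
def IsRegularGroup (G : Type*) [Group G] : Prop :=
  ∀ g ∈ Subgroup.center G, ∃ t : ℤ, t ≠ 0 ∧ g ^ t ∈ commutator G

lemma map_prodPow {G H : Type*} [Group G] [Group H] (φ : G →* H) {k : ℕ}
    (v : Fin k → G) (e : Fin k → ℤ) :
    φ (prodPow v e) = prodPow (fun i => φ (v i)) e := by
  simp [prodPow, map_list_prod, List.map_ofFn, Function.comp_def, map_zpow]

lemma prodPow_comm {H : Type*} [CommGroup H] {k : ℕ} (v : Fin k → H) (e : Fin k → ℤ) :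
    prodPow v e = ∏ i, v i ^ e i := by
  simp [prodPow, List.prod_ofFn]

lemma prodPow_ofAdd {k : ℕ} (w : Fin k → ℚ) (e : Fin k → ℤ) :
    prodPow (fun i => Multiplicative.ofAdd (w i)) e
      = Multiplicative.ofAdd (∑ i, (e i : ℚ) * w i) := by
  rw [prodPow_comm, ofAdd_sum]
  refine Finset.prod_congr rfl fun i _ => ?_
  rw [← ofAdd_zsmul, zsmul_eq_mul]

-- card of strict pairs
def ltPairsEquiv (n : ℕ) : {p : Fin n × Fin n // p.1 < p.2} ≃ (Σ j : Fin n, Fin j.val) where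
  toFun p := ⟨p.1.2, ⟨p.1.1.val, p.2⟩⟩
  invFun q := ⟨(⟨q.2.val, q.2.isLt.trans q.1.isLt⟩, q.1), q.2.isLt⟩
  left_inv p := rfl
  right_inv q := rfl

lemma card_ltPairs (n : ℕ) :
    Fintype.card {p : Fin n × Fin n // p.1 < p.2} = n * (n - 1) / 2 := by
  rw [Fintype.card_congr (ltPairsEquiv n), Fintype.card_sigma]
  simp only [Fintype.card_fin]
  rw [Fin.sum_univ_eq_sum_range (fun i => i) n, Finset.sum_range_id]

lemma exists_kernel_vec (n m : ℕ) (hgt : n * (n - 1) / 2 < m)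
    (lam : Fin m → Fin n → Fin n → ℤ) :
    ∃ v : Fin m → ℚ, v ≠ 0 ∧ ∀ i j : Fin n, i < j → ∑ t, (lam t i j : ℚ) * v t = 0 := by
  set P := {p : Fin n × Fin n // p.1 < p.2}
  let φ : (Fin m → ℚ) →ₗ[ℚ] (P → ℚ) :=
    LinearMap.pi (fun p => ∑ t : Fin m, (lam t p.1.1 p.1.2 : ℚ) • LinearMap.proj t)
  have hni : ¬ Function.Injective φ := by
    intro hinj
    have := LinearMap.finrank_le_finrank_of_injective hinj
    rw [Module.finrank_pi, Module.finrank_pi] at this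
    rw [card_ltPairs n] at this
    simp [Fintype.card_fin] at this
    omega
  rw [← LinearMap.ker_eq_bot] at hni
  obtain ⟨v, hv, hv0⟩ := (LinearMap.ker φ).ne_bot_iff.mp hni
  refine ⟨v, hv0, fun i j hij => ?_⟩
  have h0 : φ v = 0 := hv
  have := congrFun h0 ⟨(i, j), hij⟩
  simpa [φ, LinearMap.pi_apply, LinearMap.sum_apply, smul_eq_mul] using this

section Hom
variable {n m : ℕ} {lam : Fin m → Fin n → Fin n → ℤ} {v : Fin m → ℚ}
  (hv : ∀ i j : Fin n, i < j → ∑ t, (lam t i j : ℚ) * v t = 0)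

lemma tau2_lift_rels (hv : ∀ i j : Fin n, i < j → ∑ t, (lam t i j : ℚ) * v t = 0) :
    ∀ r ∈ tau2Rels n m lam,
      FreeGroup.lift (Sum.elim (fun _ => (1 : Multiplicative ℚ))
        (fun t => Multiplicative.ofAdd (v t))) r = 1 := by
  intro r hr
  set f : Fin n ⊕ Fin m → Multiplicative ℚ :=
    Sum.elim (fun _ => (1 : Multiplicative ℚ)) (fun t => Multiplicative.ofAdd (v t))
  rcases hr with ⟨i, j, hij, rfl⟩ | ⟨i, t, rfl⟩ | ⟨t, s, rfl⟩
  · rw [map_mul, map_commutatorElement, map_inv, map_prodPow]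
    have h1 : ⁅FreeGroup.lift f (FreeGroup.of (Sum.inl i)),
        FreeGroup.lift f (FreeGroup.of (Sum.inl j))⁆ = 1 :=
      commutatorElement_eq_one_iff_mul_comm.mpr (mul_comm _ _)
    rw [h1, one_mul]
    have : (fun t : Fin m => FreeGroup.lift f (FreeGroup.of (Sum.inr t)))
        = fun t => Multiplicative.ofAdd (v t) := by
      funext t; simp [f]
    rw [this, prodPow_ofAdd]
    have : (∑ t, ((lam t i j : ℚ)) * v t) = 0 := hv i j hij
    rw [this]
    simp
  · rw [map_commutatorElement]; exact commutatorElement_eq_one_iff_mul_comm.mpr (mul_comm _ _)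
  · rw [map_commutatorElement]; exact commutatorElement_eq_one_iff_mul_comm.mpr (mul_comm _ _)

noncomputable def tau2F (hv : ∀ i j : Fin n, i < j → ∑ t, (lam t i j : ℚ) * v t = 0) :
    Tau2Group n m lam →* Multiplicative ℚ :=
  PresentedGroup.toGroup (tau2_lift_rels hv)

@[simp] lemma tau2F_c (t : Fin m) : tau2F hv (tau2c t) = Multiplicative.ofAdd (v t) :=
  PresentedGroup.toGroup.of _

end Hom

lemma tau2_rel_one {n m : ℕ} {lam : Fin m → Fin n → Fin n → ℤ} {r : FreeGroup (Fin n ⊕ Fin m)}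
    (hr : r ∈ tau2Rels n m lam) : PresentedGroup.mk (tau2Rels n m lam) r = 1 :=
  (QuotientGroup.eq_one_iff r).mpr (Subgroup.subset_normalClosure hr)

lemma tau2c_comm_gen {n m : ℕ} {lam : Fin m → Fin n → Fin n → ℤ}
    (j : Fin n ⊕ Fin m) (t0 : Fin m) :
    Commute (PresentedGroup.of j : Tau2Group n m lam) (tau2c t0) := by
  apply commutatorElement_eq_one_iff_commute.mp
  cases j with
  | inl i =>
    have h := tau2_rel_one (lam := lam) (Or.inr (Or.inl ⟨i, t0, rfl⟩))
    rw [map_commutatorElement] at h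
    exact h
  | inr s =>
    have h := tau2_rel_one (lam := lam) (Or.inr (Or.inr ⟨s, t0, rfl⟩))
    rw [map_commutatorElement] at h
    exact h

lemma tau2c_mem_center {n m : ℕ} {lam : Fin m → Fin n → Fin n → ℤ} (t0 : Fin m) :
    (tau2c t0 : Tau2Group n m lam) ∈ Subgroup.center (Tau2Group n m lam) := by
  rw [Subgroup.mem_center_iff]
  intro g
  have hg : g ∈ Subgroup.centralizer {(tau2c t0 : Tau2Group n m lam)} := by
    apply PresentedGroup.generated_by
    intro j
    refine Subgroup.mem_centralizer_iff.mpr ?_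
    rintro y rfl
    exact (tau2c_comm_gen j t0).symm
  exact (Subgroup.mem_centralizer_iff.mp hg _ rfl).symm

lemma orderOf_ofAdd_ne (q : ℚ) (hq : q ≠ 0) : orderOf (Multiplicative.ofAdd q) = 0 := by
  rw [orderOf_eq_zero_iff]
  intro hfin
  obtain ⟨k, hk, hk1⟩ := isOfFinOrder_iff_pow_eq_one.mp hfin
  rw [← ofAdd_nsmul] at hk1
  have h2 : k • q = 0 := ofAdd_eq_one.mp hk1
  rw [nsmul_eq_mul] at h2
  rcases mul_eq_zero.mp h2 with h | h
  · exact absurd (by exact_mod_cast h) hk.ne'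
  · exact hq h


theorem stmt16' (n m : ℕ) (hn : 2 ≤ n) (hm : 1 ≤ m) (hgt : n * (n - 1) / 2 < m)
    (lam : Fin m → Fin n → Fin n → ℤ)
    (v : Fin m → ℚ) (hv0 : v ≠ 0)
    (hv : ∀ i j : Fin n, i < j → ∑ t, (lam t i j : ℚ) * v t = 0) :
    (commutator (Tau2Group n m lam)).relIndex
        (Subgroup.closure (Set.range (@tau2c n m lam))) = 0 ∧
    ¬ IsRegularGroup (Tau2Group n m lam) := by
  obtain ⟨t0, ht0⟩ := Function.ne_iff.mp hv0
  simp only [Pi.zero_apply] at ht0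
  set F := tau2F hv with hF
  have hFcomm : commutator (Tau2Group n m lam) ≤ F.ker :=
    Abelianization.commutator_subset_ker F
  have hx : orderOf (Multiplicative.ofAdd (v t0)) = 0 := orderOf_ofAdd_ne _ ht0
  constructor
  · set H := Subgroup.closure (Set.range (@tau2c n m lam)) with hH
    set φ := F.domRestrict H with hφ
    have hle : (commutator (Tau2Group n m lam)).subgroupOf H ≤ φ.ker := by
      intro x hx'
      rw [Subgroup.mem_subgroupOf] at hx'
      rw [MonoidHom.mem_ker, MonoidHom.restrict_apply]
      exact hFcomm hx'
    have h0 : φ.ker.index = 0 := by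
      rw [Subgroup.index_ker]
      have hz : Subgroup.zpowers (Multiplicative.ofAdd (v t0)) ≤ φ.range := by
        rw [Subgroup.zpowers_le]
        exact ⟨⟨tau2c t0, Subgroup.subset_closure ⟨t0, rfl⟩⟩,
          by rw [hφ, MonoidHom.restrict_apply]; exact tau2F_c hv t0⟩
      have hd := Subgroup.card_dvd_of_le hz
      rw [Nat.card_zpowers, hx] at hd
      exact Nat.eq_zero_of_zero_dvd hd
    exact Nat.eq_zero_of_zero_dvd (h0 ▸ Subgroup.index_dvd_of_le hle)
  · intro hreg
    obtain ⟨t, ht, htc⟩ := hreg (tau2c t0) (tau2c_mem_center t0)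
    have h1 : F ((tau2c t0) ^ t) = 1 := hFcomm htc
    rw [map_zpow, tau2F_c hv t0, ← ofAdd_zsmul] at h1
    have h2 : t • v t0 = 0 := ofAdd_eq_one.mp h1
    rw [zsmul_eq_mul] at h2
    rcases mul_eq_zero.mp h2 with h | h
    · exact ht (by exact_mod_cast h)
    · exact ht0 h

/-- Fix n ≥ 2 and m > n(n−1)/2. Then for EVERY tuple λ, in the
τ₂-presented group G = G(n,m,λ), the commutator subgroup G' has infinite index in
⟨C⟩ = ⟨c₁,…,cₘ⟩ and G is not regular. -/
theorem stmt16 (n m : ℕ) (hn : 2 ≤ n) (hm : 1 ≤ m) (hgt : n * (n - 1) / 2 < m)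
    (lam : Fin m → Fin n → Fin n → ℤ) :
    (commutator (Tau2Group n m lam)).relIndex
        (Subgroup.closure (Set.range (@tau2c n m lam))) = 0 ∧
    ¬ IsRegularGroup (Tau2Group n m lam) := by
  obtain ⟨v, hv0, hv⟩ := exists_kernel_vec n m hgt lam
  exact stmt16' n m hn hm hgt lam v hv0 hv
end

section
/- Fix integers n ≥ 2 and m ≥ 1, and let r = min(m, n(n−1)/2). For ℓ ≥ 1, consider all integer tuples λ = (λ_{t,i,j})_{1≤t≤m, 1≤i<j≤n} with |λ_{t,i,j}| ≤ ℓ, and let G = G(n,m,λ). Then the proportion of such tuples for which rank(G') = r tends to 1 as ℓ → ∞. In particular, if m > n(n−1)/2, then the proportion of tuples for which {[a_i,a_j] : 1 ≤ i < j ≤ n} is a basis of the free abelian group G' (equivalently, the n(n−1)/2 vectors (λ_{1,i,j},…,λ_{m,i,j}) ∈ ℤ^m, i < j, are linearly independent) tends to 1 as ℓ → ∞. -/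
open scoped commutatorElement

namespace St17
open Finset Function

noncomputable section
open scoped Classical

variable {n m r : ℕ}

def boxF (n m : ℕ) (ℓ : ℕ) : Finset (Fin m → PairIdx n → ℤ) :=
  Fintype.piFinset fun _ => Fintype.piFinset fun _ => Finset.Icc (-(ℓ:ℤ)) ℓ

lemma mem_boxF {ℓ : ℕ} {μ : Fin m → PairIdx n → ℤ} :
    μ ∈ boxF n m ℓ ↔ ∀ t p, |μ t p| ≤ (ℓ:ℤ) := by
  simp [boxF, Fintype.mem_piFinset, abs_le]

lemma card_boxF (ℓ : ℕ) :
    (boxF n m ℓ).card = (2*ℓ+1) ^ (m * Fintype.card (PairIdx n)) := by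
  have h1 : (Finset.Icc (-(ℓ:ℤ)) ℓ).card = 2*ℓ+1 := by
    rw [Int.card_Icc]; omega
  simp only [boxF, Fintype.card_piFinset, h1, Finset.prod_const, Finset.card_univ,
    Fintype.card_fin]
  rw [← pow_mul, mul_comm (Fintype.card (PairIdx n)) m]

def updEntry (μ : Fin m → PairIdx n → ℤ) (t₀ : Fin m) (p₀ : PairIdx n) (x : ℤ) :
    Fin m → PairIdx n → ℤ :=
  Function.update μ t₀ (Function.update (μ t₀) p₀ x)

lemma updEntry_apply (μ : Fin m → PairIdx n → ℤ) (t₀ : Fin m) (p₀ : PairIdx n) (x : ℤ)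
    (t : Fin m) (p : PairIdx n) :
    updEntry μ t₀ p₀ x t p = if t = t₀ ∧ p = p₀ then x else μ t p := by
  unfold updEntry
  by_cases ht : t = t₀
  · subst ht
    by_cases hp : p = p₀
    · subst hp; simp
    · simp [Function.update_of_ne hp, hp]
  · simp [Function.update_of_ne ht, ht]

lemma pinned_card {ℓ : ℕ} {S : Finset (Fin m → PairIdx n → ℤ)} (hS : S ⊆ boxF n m ℓ)
    (t₀ : Fin m) (p₀ : PairIdx n)
    (hdet : ∀ μ ∈ S, ∀ μ' ∈ S, (∀ t p, ¬(t = t₀ ∧ p = p₀) → μ t p = μ' t p) → μ = μ') :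
    S.card * (2*ℓ+1) ≤ (boxF n m ℓ).card := by
  have key : (S ×ˢ Finset.Icc (-(ℓ:ℤ)) ℓ).card ≤ (boxF n m ℓ).card := by
    apply Finset.card_le_card_of_injOn (fun q => updEntry q.1 t₀ p₀ q.2)
    · rintro ⟨μ, x⟩ hq
      rw [Finset.mem_coe, Finset.mem_product] at hq
      rw [Finset.mem_coe, mem_boxF]
      dsimp only
      intro t p
      rw [updEntry_apply]
      split
      · rw [Finset.mem_Icc] at hq; rw [abs_le]; exact hq.2
      · exact (mem_boxF.mp (hS hq.1)) t p
    · rintro ⟨μ, x⟩ hq ⟨μ', x'⟩ hq' heq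
      simp only [Finset.coe_product, Set.mem_prod, Finset.mem_coe] at hq hq'
      have hx : x = x' := by
        have := congrFun (congrFun heq t₀) p₀
        simpa [updEntry_apply] using this
      have hμ : μ = μ' := by
        apply hdet μ hq.1 μ' hq'.1
        intro t p htp
        have := congrFun (congrFun heq t) p
        simpa [updEntry_apply, htp] using this
      simp [hx, hμ]
  have hc : (Finset.Icc (-(ℓ:ℤ)) ℓ).card = 2*ℓ+1 := by rw [Int.card_Icc]; omega
  rwa [Finset.card_product, hc] at key

end
end St17
namespace St17
open Finset Function Matrix

noncomputable section
open scoped Classical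

variable {r : ℕ}

/-- the linear functional x ↦ ∑ j, a j * x j -/
def dotL (a : Fin r → ℚ) : (Fin r → ℚ) →ₗ[ℚ] ℚ where
  toFun x := ∑ j, a j * x j
  map_add' x y := by simp [mul_add, Finset.sum_add_distrib]
  map_smul' c x := by simp [Finset.mul_sum]; ring_nf; simp [mul_assoc, mul_comm, mul_left_comm]

lemma exists_normal (i : Fin r) (w : {i' : Fin r // i' ≠ i} → (Fin r → ℚ)) :
    ∃ a : Fin r → ℚ, a ≠ 0 ∧ ∀ i', ∑ j, a j * w i' j = 0 := by
  have hr : 0 < r := i.pos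
  set F : (Fin r → ℚ) →ₗ[ℚ] ({i' : Fin r // i' ≠ i} → ℚ) :=
    { toFun := fun a i' => ∑ j, a j * w i' j
      map_add' := by intro x y; funext i'; simp [add_mul, Finset.sum_add_distrib]
      map_smul' := by
        intro c x; funext i'
        simp [Finset.mul_sum, mul_assoc] } with hF
  by_contra h
  push_neg at h
  have hker : LinearMap.ker F = ⊥ := by
    rw [LinearMap.ker_eq_bot']
    intro a ha
    by_contra ha0
    obtain ⟨i', hi'⟩ := h a ha0
    exact hi' (congrFun ha i')
  have hinj : Function.Injective F := LinearMap.ker_eq_bot.mp hker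
  have hle := LinearMap.finrank_le_finrank_of_injective hinj
  have h1 : Module.finrank ℚ (Fin r → ℚ) = r := by simp
  have h2 : Module.finrank ℚ ({i' : Fin r // i' ≠ i} → ℚ) = r - 1 := by
    rw [Module.finrank_pi]
    have : Fintype.card {i' : Fin r // i' ≠ i} = r - 1 := by
      simp [Fintype.card_subtype_compl]
    exact this
  rw [h1, h2] at hle
  omega

def nvec (i : Fin r) (w : {i' : Fin r // i' ≠ i} → (Fin r → ℚ)) : Fin r → ℚ :=
  Classical.choose (exists_normal i w)

lemma nvec_ne_zero (i : Fin r) (w : {i' : Fin r // i' ≠ i} → (Fin r → ℚ)) :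
    nvec i w ≠ 0 := (Classical.choose_spec (exists_normal i w)).1

lemma nvec_orth (i : Fin r) (w : {i' : Fin r // i' ≠ i} → (Fin r → ℚ)) (i' : {i' : Fin r // i' ≠ i}) :
    ∑ j, nvec i w j * w i' j = 0 := (Classical.choose_spec (exists_normal i w)).2 i'

lemma nvec_orth_span (i : Fin r) (w : {i' : Fin r // i' ≠ i} → (Fin r → ℚ))
    {x : Fin r → ℚ} (hx : x ∈ Submodule.span ℚ (Set.range w)) :
    ∑ j, nvec i w j * x j = 0 := by
  have hle : Submodule.span ℚ (Set.range w) ≤ LinearMap.ker (dotL (nvec i w)) := by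
    rw [Submodule.span_le]
    rintro _ ⟨i', rfl⟩
    exact nvec_orth i w i'
  exact hle hx

def pickj (i : Fin r) (w : {i' : Fin r // i' ≠ i} → (Fin r → ℚ)) : Fin r :=
  Classical.choose (Function.ne_iff.mp (nvec_ne_zero i w))

lemma pickj_spec (i : Fin r) (w : {i' : Fin r // i' ≠ i} → (Fin r → ℚ)) :
    nvec i w (pickj i w) ≠ 0 :=
  Classical.choose_spec (Function.ne_iff.mp (nvec_ne_zero i w))

/-- If the rows are linearly dependent, some row lies in the span of the others. -/
lemma row_in_span_of_det_eq_zero {A : Matrix (Fin r) (Fin r) ℚ} (hA : A.det = 0) :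
    ∃ i : Fin r, A i ∈ Submodule.span ℚ (Set.range (fun (i' : {q : Fin r // q ≠ i}) => A i'.1)) := by
  have hAT : Aᵀ.det = 0 := by rwa [Matrix.det_transpose]
  obtain ⟨g, hg0, hgv⟩ := (Matrix.exists_mulVec_eq_zero_iff).mpr hAT
  obtain ⟨i₀, hi₀⟩ := Function.ne_iff.mp hg0
  refine ⟨i₀, ?_⟩
  have hsum : ∑ i, g i • A i = 0 := by
    funext j
    have := congrFun hgv j
    simpa [Matrix.mulVec, dotProduct, Matrix.transpose_apply, mul_comm,
      Finset.sum_apply] using this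
  have hsplit : g i₀ • A i₀ = -∑ i ∈ Finset.univ.erase i₀, g i • A i := by
    have := Finset.add_sum_erase Finset.univ (fun i => g i • A i) (Finset.mem_univ i₀)
    rw [hsum] at this
    linear_combination (norm := module) this
  have : A i₀ = (g i₀)⁻¹ • -∑ i ∈ Finset.univ.erase i₀, g i • A i := by
    rw [← hsplit, smul_smul, inv_mul_cancel₀ (by simpa using hi₀), one_smul]
  rw [this]
  apply Submodule.smul_mem
  apply Submodule.neg_mem
  apply Submodule.sum_mem
  intro i hi
  apply Submodule.smul_mem
  apply Submodule.subset_span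
  exact ⟨⟨i, Finset.ne_of_mem_erase hi⟩, rfl⟩

end
end St17
namespace St17
open Finset Function Matrix

noncomputable section
open scoped Classical

variable {n m r : ℕ}

/-- the `r × r` submatrix of `μ`, over `ℚ`, rows indexed by pairs via `ρ`,
columns by `τ`. -/
def rowsQ (ρ : Fin r → PairIdx n) (τ : Fin r → Fin m) (μ : Fin m → PairIdx n → ℤ) :
    Fin r → Fin r → ℚ :=
  fun i j => ((μ (τ j) (ρ i) : ℤ) : ℚ)

def otherRows (ρ : Fin r → PairIdx n) (τ : Fin r → Fin m) (μ : Fin m → PairIdx n → ℤ)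
    (i : Fin r) : {q : Fin r // q ≠ i} → (Fin r → ℚ) :=
  fun i' => rowsQ ρ τ μ i'.1

def badSet (ρ : Fin r → PairIdx n) (τ : Fin r → Fin m) (ℓ : ℕ) (i j : Fin r) :
    Finset (Fin m → PairIdx n → ℤ) :=
  (boxF n m ℓ).filter (fun μ =>
    rowsQ ρ τ μ i ∈ Submodule.span ℚ (Set.range (otherRows ρ τ μ i)) ∧
    pickj i (otherRows ρ τ μ i) = j)

lemma badSet_pinned {ρ : Fin r → PairIdx n} {τ : Fin r → Fin m}
    (hρ : Function.Injective ρ) (hτ : Function.Injective τ) (ℓ : ℕ) (i j : Fin r) :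
    (badSet ρ τ ℓ i j).card * (2*ℓ+1) ≤ (boxF n m ℓ).card := by
  apply pinned_card (Finset.filter_subset _ _) (τ j) (ρ i)
  intro μ hμ μ' hμ' hagree
  simp only [badSet, Finset.mem_filter] at hμ hμ'
  -- other rows agree
  have hother : otherRows ρ τ μ i = otherRows ρ τ μ' i := by
    funext i' j'
    simp only [otherRows, rowsQ]
    congr 1
    apply hagree
    rintro ⟨h1, h2⟩
    exact i'.2 (hρ h2)
  set a := nvec i (otherRows ρ τ μ i) with ha
  have hj : a j ≠ 0 := by
    rw [ha, ← hμ.2.2]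
    exact pickj_spec i (otherRows ρ τ μ i)
  have hs1 : ∑ j', a j' * rowsQ ρ τ μ i j' = 0 := nvec_orth_span i _ hμ.2.1
  have hs2 : ∑ j', a j' * rowsQ ρ τ μ' i j' = 0 := by
    rw [ha, hother]
    exact nvec_orth_span i _ (hother ▸ hμ'.2.1)
  -- rows agree off j
  have hrow : ∀ j' : Fin r, j' ≠ j → rowsQ ρ τ μ i j' = rowsQ ρ τ μ' i j' := by
    intro j' hj'
    simp only [rowsQ]
    congr 1
    apply hagree
    rintro ⟨h1, h2⟩
    exact hj' (hτ h1)
  have hkey : rowsQ ρ τ μ i j = rowsQ ρ τ μ' i j := by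
    have e1 := Finset.add_sum_erase Finset.univ (fun j' => a j' * rowsQ ρ τ μ i j')
      (Finset.mem_univ j)
    have e2 := Finset.add_sum_erase Finset.univ (fun j' => a j' * rowsQ ρ τ μ' i j')
      (Finset.mem_univ j)
    rw [hs1] at e1
    rw [hs2] at e2
    have erest : ∑ j' ∈ Finset.univ.erase j, a j' * rowsQ ρ τ μ i j'
        = ∑ j' ∈ Finset.univ.erase j, a j' * rowsQ ρ τ μ' i j' := by
      apply Finset.sum_congr rfl
      intro j' hj'
      rw [hrow j' (Finset.ne_of_mem_erase hj')]
    have e1' : a j * rowsQ ρ τ μ i j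
        + ∑ j' ∈ Finset.univ.erase j, a j' * rowsQ ρ τ μ i j' = 0 := by simpa using e1
    have e2' : a j * rowsQ ρ τ μ' i j
        + ∑ j' ∈ Finset.univ.erase j, a j' * rowsQ ρ τ μ' i j' = 0 := by simpa using e2
    have : a j * rowsQ ρ τ μ i j = a j * rowsQ ρ τ μ' i j := by
      rw [erest] at e1'
      linarith
    exact mul_left_cancel₀ hj this
  have hμτρ : μ (τ j) (ρ i) = μ' (τ j) (ρ i) := by
    have := hkey
    simp only [rowsQ] at this
    exact_mod_cast this
  funext t p
  by_cases h : t = τ j ∧ p = ρ i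
  · rw [h.1, h.2]; exact hμτρ
  · exact hagree t p h

lemma bad_subset {ρ : Fin r → PairIdx n} {τ : Fin r → Fin m} (ℓ : ℕ) :
    (boxF n m ℓ).filter (fun μ => (Matrix.of (rowsQ ρ τ μ)).det = 0) ⊆
      (Finset.univ : Finset (Fin r × Fin r)).biUnion (fun q => badSet ρ τ ℓ q.1 q.2) := by
  intro μ hμ
  rw [Finset.mem_filter] at hμ
  obtain ⟨i, hi⟩ := row_in_span_of_det_eq_zero hμ.2
  refine Finset.mem_biUnion.mpr ⟨(i, pickj i (otherRows ρ τ μ i)), Finset.mem_univ _, ?_⟩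
  simp only [badSet, Finset.mem_filter]
  exact ⟨hμ.1, hi, trivial⟩

lemma count_singular {ρ : Fin r → PairIdx n} {τ : Fin r → Fin m}
    (hρ : Function.Injective ρ) (hτ : Function.Injective τ) (ℓ : ℕ) :
    ((boxF n m ℓ).filter (fun μ => (Matrix.of (rowsQ ρ τ μ)).det = 0)).card * (2*ℓ+1)
      ≤ r * r * (boxF n m ℓ).card := by
  calc ((boxF n m ℓ).filter (fun μ => (Matrix.of (rowsQ ρ τ μ)).det = 0)).card * (2*ℓ+1)
      ≤ ((Finset.univ : Finset (Fin r × Fin r)).biUnion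
          (fun q => badSet ρ τ ℓ q.1 q.2)).card * (2*ℓ+1) := by
        exact Nat.mul_le_mul_right _ (Finset.card_le_card (bad_subset ℓ))
    _ ≤ (∑ q : Fin r × Fin r, (badSet ρ τ ℓ q.1 q.2).card) * (2*ℓ+1) := by
        exact Nat.mul_le_mul_right _ (Finset.card_biUnion_le)
    _ = ∑ q : Fin r × Fin r, (badSet ρ τ ℓ q.1 q.2).card * (2*ℓ+1) := by
        rw [Finset.sum_mul]
    _ ≤ ∑ _q : Fin r × Fin r, (boxF n m ℓ).card := by
        apply Finset.sum_le_sum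
        intro q _
        exact badSet_pinned hρ hτ ℓ q.1 q.2
    _ = r * r * (boxF n m ℓ).card := by
        simp [Finset.sum_const, Finset.card_univ, mul_assoc]

end
end St17
namespace St17
open Finset Function

noncomputable section
open scoped Classical

variable {n m r : ℕ}

def vv (μ : Fin m → PairIdx n → ℤ) : PairIdx n → (Fin m → ℤ) := fun p t => μ t p

lemma linIndep_of_det {μ : Fin m → PairIdx n → ℤ} {ρ : Fin r → PairIdx n} {τ : Fin r → Fin m}
    (hdet : (Matrix.of (rowsQ ρ τ μ)).det ≠ 0) :
    LinearIndependent ℤ (vv μ ∘ ρ) := by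
  have h1 : LinearIndependent ℚ (fun i => (Matrix.of (rowsQ ρ τ μ)) i) := by
    show LinearIndependent ℚ (Matrix.of (rowsQ ρ τ μ)).row
    rw [Matrix.linearIndependent_rows_iff_isUnit, Matrix.isUnit_iff_isUnit_det]
    exact isUnit_iff_ne_zero.mpr hdet
  set vQ : PairIdx n → (Fin m → ℚ) := fun p t => ((μ t p : ℤ) : ℚ) with hvQ
  have h2 : LinearIndependent ℚ (vQ ∘ ρ) := by
    apply LinearIndependent.of_comp (LinearMap.funLeft ℚ ℚ τ)
    convert h1 using 1
    rfl
  have h3 : LinearIndependent ℤ (vQ ∘ ρ) := by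
    apply h2.restrict_scalars
    intro a b hab
    have : (a : ℚ) = (b : ℚ) := by simpa [zsmul_eq_mul] using hab
    exact_mod_cast this
  apply LinearIndependent.of_comp (LinearMap.compLeft (Algebra.linearMap ℤ ℚ) (Fin m))
  convert h3 using 1
  · rfl
  · rfl
  · exact Subsingleton.elim _ _

lemma finrank_span_vv {μ : Fin m → PairIdx n → ℤ} {ρ : Fin r → PairIdx n} {τ : Fin r → Fin m}
    (hdet : (Matrix.of (rowsQ ρ τ μ)).det ≠ 0)
    (hmin : r = min m (Fintype.card (PairIdx n))) :
    Module.finrank ℤ (Submodule.span ℤ (Set.range (vv μ))) = r := by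
  set S' := Submodule.span ℤ (Set.range (vv μ)) with hS'
  apply le_antisymm
  · -- ≤ min m N
    rw [hmin]
    apply le_min
    · have := Submodule.finrank_le S'
      simpa using this
    · have h1 : Module.rank ℤ S' ≤ (Fintype.card (PairIdx n) : Cardinal) := by
        refine (rank_span_le _).trans ?_
        refine Cardinal.mk_range_le.trans ?_
        simp
      exact Module.finrank_le_of_rank_le h1
  · -- r ≤ finrank
    have hw : ∀ i, vv μ (ρ i) ∈ S' := fun i => Submodule.subset_span ⟨ρ i, rfl⟩
    set w : Fin r → S' := fun i => ⟨vv μ (ρ i), hw i⟩ with hwdef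
    have hli : LinearIndependent ℤ w := by
      apply LinearIndependent.of_comp S'.subtype
      have : (⇑S'.subtype ∘ w) = vv μ ∘ ρ := rfl
      rw [this]
      exact linIndep_of_det hdet
    have hcard := hli.cardinal_le_rank
    rw [← Module.finrank_eq_rank ℤ S'] at hcard
    simp only [Cardinal.mk_fintype, Fintype.card_fin] at hcard
    exact_mod_cast hcard
end
end St17
namespace St17
open Finset Function

noncomputable section
open scoped Classical

/-- homs commute with prodPow -/
lemma map_prodPow {G H : Type*} [Group G] [Group H] (F : G →* H) {k : ℕ}
    (v : Fin k → G) (e : Fin k → ℤ) :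
    F (prodPow v e) = prodPow (fun i => F (v i)) e := by
  rw [prodPow, prodPow, map_list_prod]
  congr 1
  rw [List.map_ofFn]
  congr 1
  funext i
  simp [map_zpow]

lemma prodPow_hom {A G : Type*} [CommGroup A] [Group G] (F : A →* G) {k : ℕ}
    (w : Fin k → A) (e : Fin k → ℤ) :
    prodPow (fun i => F (w i)) e = F (∏ i, w i ^ e i) := by
  rw [← map_prodPow F w e, prodPow, List.prod_ofFn]

lemma genset_subset_of_iso {G' : Type*} {H' : Type*} [Group G'] [Group H'] (e' : G' ≃* H') :
      {k : ℕ | ∃ S : Finset G', S.card = k ∧ Subgroup.closure (S : Set G') = ⊤} ⊆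
      {k : ℕ | ∃ S : Finset H', S.card = k ∧ Subgroup.closure (S : Set H') = ⊤} := by
  rintro k ⟨S, hcard, htop⟩
  refine ⟨S.image e', ?_, ?_⟩
  · rw [Finset.card_image_of_injective _ e'.injective, hcard]
  · rw [Finset.coe_image, ← MulEquiv.coe_toMonoidHom, ← MonoidHom.map_closure, htop]
    exact Subgroup.map_top_of_surjective _ e'.surjective

lemma grpRank_congr {G : Type*} {H : Type*} [Group G] [Group H] (e : G ≃* H) :
    grpRank G = grpRank H := by
  unfold grpRank
  exact congrArg sInf (Set.Subset.antisymm (genset_subset_of_iso e) (genset_subset_of_iso e.symm))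

/-- bridge between multiplicative subgroup closure and additive closure -/
lemma mem_mult_closure_iff {M : Type*} [AddCommGroup M] (s : Set M)
    (x : Multiplicative M) :
    x ∈ Subgroup.closure (Multiplicative.ofAdd '' s) ↔
      Multiplicative.toAdd x ∈ AddSubgroup.closure s := by
  constructor
  · intro hx
    induction hx using Subgroup.closure_induction with
    | mem y hy =>
      obtain ⟨z, hz, rfl⟩ := hy
      simpa using AddSubgroup.subset_closure hz
    | one => simpa using AddSubgroup.zero_mem _
    | mul y z _ _ hy hz => simpa using AddSubgroup.add_mem _ hy hz
    | inv y _ hy => simpa using AddSubgroup.neg_mem _ hy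
  · intro hx
    have : ∀ u : M, u ∈ AddSubgroup.closure s →
        Multiplicative.ofAdd u ∈ Subgroup.closure (Multiplicative.ofAdd '' s) := by
      intro u hu
      induction hu using AddSubgroup.closure_induction with
      | mem y hy => exact Subgroup.subset_closure ⟨y, hy, rfl⟩
      | zero => exact Subgroup.one_mem _
      | add y z _ _ hy hz => exact Subgroup.mul_mem _ hy hz
      | neg y _ hy => exact Subgroup.inv_mem _ hy
    simpa using this _ hx
end
end St17
namespace St17
open Finset Function

noncomputable section
open scoped Classical

lemma addClosure_top_iff_span {M : Type*} [AddCommGroup M] (s : Set M) :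
    AddSubgroup.closure s = ⊤ ↔ Submodule.span ℤ s = ⊤ := by
  rw [← Submodule.span_int_eq_addSubgroupClosure]
  constructor
  · intro h
    rw [Submodule.eq_top_iff']
    intro x
    have : x ∈ ((Submodule.span ℤ s).toAddSubgroup : AddSubgroup M) := by rw [h]; trivial
    exact this
  · intro h; rw [h]; rfl

lemma mult_closure_top_iff_span {M : Type*} [AddCommGroup M] (B : Set (Multiplicative M)) :
    Subgroup.closure B = ⊤ ↔ Submodule.span ℤ (Multiplicative.toAdd '' B) = ⊤ := by
  rw [← addClosure_top_iff_span]
  have hB : B = Multiplicative.ofAdd '' (Multiplicative.toAdd '' B) := by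
    rw [Set.image_image]; simp
  constructor
  · intro h
    rw [AddSubgroup.eq_top_iff']
    intro x
    have hx : Multiplicative.ofAdd x ∈ Subgroup.closure B := by rw [h]; trivial
    rw [hB] at hx
    simpa using (mem_mult_closure_iff _ _).mp hx
  · intro h
    rw [Subgroup.eq_top_iff']
    intro x
    rw [hB, mem_mult_closure_iff, h]; trivial

/-- the rank of the multiplicative version of a finite free `ℤ`-module is its finrank -/
lemma grpRank_multiplicative {M : Type*} [AddCommGroup M]
    [Module.Free ℤ M] [Module.Finite ℤ M] :
    grpRank (Multiplicative M) = Module.finrank ℤ M := by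
  classical
  set b := Module.Free.chooseBasis ℤ M with hb
  have hcardb : Fintype.card (Module.Free.ChooseBasisIndex ℤ M) = Module.finrank ℤ M :=
    (Module.finrank_eq_card_chooseBasisIndex ℤ M).symm
  have hmem : Module.finrank ℤ M ∈
      {k : ℕ | ∃ S : Finset (Multiplicative M), S.card = k ∧ Subgroup.closure (S : Set (Multiplicative M)) = ⊤} := by
    refine ⟨Finset.univ.image (fun i => Multiplicative.ofAdd (b i)), ?_, ?_⟩
    · rw [Finset.card_image_of_injective, Finset.card_univ, hcardb]
      exact fun i j hij => b.injective (by simpa using hij)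
    · rw [mult_closure_top_iff_span]
      have : Multiplicative.toAdd '' ((Finset.univ.image
          (fun i => Multiplicative.ofAdd (b i)) : Finset (Multiplicative M)) : Set _)
          = Set.range b := by
        rw [Finset.coe_image, Set.image_image]
        simp [Set.image_univ]
      rw [this, b.span_eq]
  apply le_antisymm
  · exact Nat.sInf_le hmem
  · apply le_csInf ⟨Module.finrank ℤ M, hmem⟩
    rintro k ⟨S, hcard, htop⟩
    rw [mult_closure_top_iff_span] at htop
    have h1 : Module.rank ℤ M ≤ k := by
      have := rank_span_le (R := ℤ) (Multiplicative.toAdd '' (S : Set (Multiplicative M)))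
      rw [htop, rank_top] at this
      refine this.trans ?_
      refine le_trans Cardinal.mk_image_le ?_
      have h2 : Cardinal.mk (↑S : Set (Multiplicative M)) = (S.card : Cardinal) :=
        Cardinal.mk_coe_finset
      rw [h2, hcard]
    exact Module.finrank_le_of_rank_le h1
end
end St17
namespace St17
open Finset Function

noncomputable section
open scoped Classical

variable {n m : ℕ}

/-- bilinear form used as cocycle -/
def HB (μ : Fin m → PairIdx n → ℤ) (x y : Fin n → ℤ) : Fin m → ℤ :=
  fun t => ∑ p : PairIdx n, x p.1.1 * y p.1.2 * μ t p

lemma HB_add_left (μ : Fin m → PairIdx n → ℤ) (x x' y : Fin n → ℤ) :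
    HB μ (x + x') y = HB μ x y + HB μ x' y := by
  funext t; simp [HB, add_mul, Finset.sum_add_distrib]

lemma HB_add_right (μ : Fin m → PairIdx n → ℤ) (x y y' : Fin n → ℤ) :
    HB μ x (y + y') = HB μ x y + HB μ x y' := by
  funext t; simp [HB, mul_add, add_mul, Finset.sum_add_distrib]

lemma HB_zero_left (μ : Fin m → PairIdx n → ℤ) (y : Fin n → ℤ) : HB μ 0 y = 0 := by
  funext t; simp [HB]

lemma HB_zero_right (μ : Fin m → PairIdx n → ℤ) (x : Fin n → ℤ) : HB μ x 0 = 0 := by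
  funext t; simp [HB]

lemma HB_neg_left (μ : Fin m → PairIdx n → ℤ) (x y : Fin n → ℤ) :
    HB μ (-x) y = -HB μ x y := by
  funext t; simp [HB, Finset.sum_neg_distrib]

lemma HB_neg_right (μ : Fin m → PairIdx n → ℤ) (x y : Fin n → ℤ) :
    HB μ x (-y) = -HB μ x y := by
  funext t; simp [HB, Finset.sum_neg_distrib]

/-- The model group: `(Fin n → ℤ) × (Fin m → ℤ)` with twisted multiplication. -/
def Hmodel (n m : ℕ) (_μ : Fin m → PairIdx n → ℤ) : Type :=
  (Fin n → ℤ) × (Fin m → ℤ)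

variable {μ : Fin m → PairIdx n → ℤ}

instance : Group (Hmodel n m μ) where
  mul a b := (a.1 + b.1, a.2 + b.2 + HB μ a.1 b.1)
  one := (0, 0)
  inv a := (-a.1, HB μ a.1 a.1 - a.2)
  mul_assoc a b c := by
    show (_, _) = (_ : Hmodel n m μ)
    refine Prod.ext ?_ ?_
    · show a.1 + b.1 + c.1 = a.1 + (b.1 + c.1); abel
    · show a.2 + b.2 + HB μ a.1 b.1 + c.2 + HB μ (a.1 + b.1) c.1
        = a.2 + (b.2 + c.2 + HB μ b.1 c.1) + HB μ a.1 (b.1 + c.1)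
      rw [HB_add_left, HB_add_right]; abel
  one_mul a := by
    refine Prod.ext ?_ ?_
    · show 0 + a.1 = a.1; abel
    · show 0 + a.2 + HB μ 0 a.1 = a.2; rw [HB_zero_left]; abel
  mul_one a := by
    refine Prod.ext ?_ ?_
    · show a.1 + 0 = a.1; abel
    · show a.2 + 0 + HB μ a.1 0 = a.2; rw [HB_zero_right]; abel
  inv_mul_cancel a := by
    refine Prod.ext ?_ ?_
    · show -a.1 + a.1 = 0; abel
    · show (HB μ a.1 a.1 - a.2) + a.2 + HB μ (-a.1) a.1 = 0
      rw [HB_neg_left]; abel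

lemma Hmul_def (a b : Hmodel n m μ) :
    a * b = (a.1 + b.1, a.2 + b.2 + HB μ a.1 b.1) := rfl

lemma Hone_def : (1 : Hmodel n m μ) = (0, 0) := rfl

lemma Hinv_def (a : Hmodel n m μ) : a⁻¹ = (-a.1, HB μ a.1 a.1 - a.2) := rfl

/-- central embedding of the additive group `Fin m → ℤ` -/
def ιH (μ : Fin m → PairIdx n → ℤ) : Multiplicative (Fin m → ℤ) →* Hmodel n m μ where
  toFun v := ((0 : Fin n → ℤ), Multiplicative.toAdd v)
  map_one' := rfl
  map_mul' v w := by
    refine Prod.ext ?_ ?_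
    · show (0 : Fin n → ℤ) = 0 + 0; abel
    · show Multiplicative.toAdd (v * w) = Multiplicative.toAdd v + Multiplicative.toAdd w + HB μ 0 0
      rw [HB_zero_left]; simp

lemma ιH_comm (v : Multiplicative (Fin m → ℤ)) (h : Hmodel n m μ) :
    ιH μ v * h = h * ιH μ v := by
  simp only [ιH, MonoidHom.coe_mk, OneHom.coe_mk, Hmul_def]
  refine Prod.ext ?_ ?_
  · show 0 + h.1 = h.1 + 0; abel
  · show Multiplicative.toAdd v + h.2 + HB μ 0 h.1 = h.2 + Multiplicative.toAdd v + HB μ h.1 0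
    rw [HB_zero_left, HB_zero_right]; abel

/-- the generators of the first factor -/
def αH (μ : Fin m → PairIdx n → ℤ) (i : Fin n) : Hmodel n m μ :=
  (Pi.single i 1, 0)

lemma HB_single_single (i j : Fin n) (hij : i < j) (t : Fin m) :
    HB μ (Pi.single i 1) (Pi.single j 1) t = μ t ⟨(i, j), hij⟩ := by
  rw [HB]
  rw [Finset.sum_eq_single (⟨(i, j), hij⟩ : PairIdx n)]
  · simp
  · rintro ⟨⟨i', j'⟩, hb⟩ _ hne
    by_cases h1 : i' = i
    · by_cases h2 : j' = j
      · exact absurd (by subst h1; subst h2; rfl) hne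
      · simp [Pi.single_apply, h2]
    · simp [Pi.single_apply, h1]
  · simp

lemma HB_single_single_rev (i j : Fin n) (hij : i < j) (t : Fin m) :
    HB μ (Pi.single j 1) (Pi.single i 1) t = 0 := by
  rw [HB]
  apply Finset.sum_eq_zero
  rintro ⟨⟨i', j'⟩, hb⟩ _
  by_cases h1 : i' = j
  · by_cases h2 : j' = i
    · exfalso; rw [h1, h2] at hb; exact absurd (hb.trans hij) (lt_irrefl j)
    · simp [Pi.single_apply, h2]
  · simp [Pi.single_apply, h1]

lemma H_commutator (a b : Hmodel n m μ) :
    ⁅a, b⁆ = ((0 : Fin n → ℤ), HB μ a.1 b.1 - HB μ b.1 a.1) := by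
  rw [commutatorElement_def]
  simp only [Hmul_def, Hinv_def]
  refine Prod.ext ?_ ?_
  · show a.1 + b.1 + -a.1 + -b.1 = 0; abel
  · show a.2 + b.2 + HB μ a.1 b.1 + (HB μ a.1 a.1 - a.2) + HB μ (a.1+b.1) (-a.1)
        + (HB μ b.1 b.1 - b.2) + HB μ (a.1 + b.1 + -a.1) (-b.1)
      = HB μ a.1 b.1 - HB μ b.1 a.1
    rw [show a.1 + b.1 + -a.1 = b.1 by abel]
    rw [HB_add_left, HB_neg_right, HB_neg_right, HB_neg_right]
    abel

lemma H_commutator_single (i j : Fin n) (hij : i < j) :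
    ⁅αH μ i, αH μ j⁆ = ιH μ (Multiplicative.ofAdd (fun t => μ t ⟨(i, j), hij⟩)) := by
  rw [H_commutator]
  refine Prod.ext rfl ?_
  show HB μ (Pi.single i 1) (Pi.single j 1) - HB μ (Pi.single j 1) (Pi.single i 1)
      = (fun t => μ t ⟨(i, j), hij⟩)
  funext t
  simp only [Pi.sub_apply, HB_single_single i j hij t, HB_single_single_rev i j hij t]
  ring

end
end St17
namespace St17
open Finset Function

noncomputable section
open scoped Classical

variable {n m : ℕ} (μ : Fin m → PairIdx n → ℤ)

abbrev TG (μ : Fin m → PairIdx n → ℤ) := Tau2Group n m (lamOf μ)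

def ofG (μ : Fin m → PairIdx n → ℤ) (x : Fin n ⊕ Fin m) : TG μ := PresentedGroup.of x

lemma closure_range_ofG : Subgroup.closure (Set.range (ofG μ)) = ⊤ :=
  PresentedGroup.closure_range_of _

def fH (μ : Fin m → PairIdx n → ℤ) : Fin n ⊕ Fin m → Hmodel n m μ :=
  Sum.elim (αH μ) (fun t => ιH μ (Multiplicative.ofAdd (Pi.single t 1)))

lemma prod_single_ofAdd (e : Fin m → ℤ) :
    (∏ t, (Multiplicative.ofAdd (Pi.single t (1:ℤ) : Fin m → ℤ)) ^ e t)
      = Multiplicative.ofAdd e := by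
  apply Multiplicative.toAdd.injective
  rw [toAdd_prod]
  simp only [toAdd_zpow, toAdd_ofAdd]
  funext s
  rw [Finset.sum_apply]
  simp [Pi.single_apply]

lemma hrels : ∀ rel ∈ tau2Rels n m (lamOf μ), FreeGroup.lift (fH μ) rel = 1 := by
  rintro rel (⟨i, j, hij, rfl⟩ | ⟨i, t, rfl⟩ | ⟨t, s, rfl⟩)
  · rw [map_mul, map_commutatorElement, map_inv, map_prodPow]
    simp only [FreeGroup.lift_apply_of]
    have h2 : prodPow (fun t => fH μ (Sum.inr t)) (fun t => lamOf μ t i j)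
        = ιH μ (Multiplicative.ofAdd (fun t => lamOf μ t i j)) := by
      rw [show (fun t => fH μ (Sum.inr t))
          = fun t => ιH μ (Multiplicative.ofAdd (Pi.single t 1)) from rfl]
      rw [prodPow_hom (ιH μ) (fun t => Multiplicative.ofAdd (Pi.single t 1)),
        prod_single_ofAdd]
    rw [h2]
    have h1 : ⁅fH μ (Sum.inl i), fH μ (Sum.inl j)⁆
        = ιH μ (Multiplicative.ofAdd (fun t => lamOf μ t i j)) := by
      rw [show fH μ (Sum.inl i) = αH μ i from rfl, show fH μ (Sum.inl j) = αH μ j from rfl]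
      rw [H_commutator_single i j hij]
      congr 1
      funext t
      simp [lamOf, hij]
    rw [h1, mul_inv_cancel]
  · rw [map_commutatorElement]
    simp only [FreeGroup.lift_apply_of]
    rw [commutatorElement_eq_one_iff_commute]
    exact (ιH_comm _ _).symm
  · rw [map_commutatorElement]
    simp only [FreeGroup.lift_apply_of]
    rw [commutatorElement_eq_one_iff_commute]
    exact (ιH_comm _ _).symm

def φH (μ : Fin m → PairIdx n → ℤ) : TG μ →* Hmodel n m μ :=
  PresentedGroup.toGroup (hrels μ)

lemma φH_a (i : Fin n) : φH μ (tau2a i) = αH μ i := PresentedGroup.toGroup.of _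

lemma φH_c (t : Fin m) : φH μ (tau2c t) = ιH μ (Multiplicative.ofAdd (Pi.single t 1)) :=
  PresentedGroup.toGroup.of _

lemma mk_rel {rel : FreeGroup (Fin n ⊕ Fin m)} (h : rel ∈ tau2Rels n m (lamOf μ)) :
    PresentedGroup.mk (tau2Rels n m (lamOf μ)) rel = 1 :=
  (QuotientGroup.eq_one_iff _).mpr (Subgroup.subset_normalClosure h)

lemma comm_ac (i : Fin n) (t : Fin m) :
    Commute (tau2a (lam := lamOf μ) i) (tau2c t) := by
  rw [← commutatorElement_eq_one_iff_commute]
  have h := mk_rel μ (Or.inr (Or.inl ⟨i, t, rfl⟩))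
  rw [map_commutatorElement] at h
  exact h

lemma comm_cc (t s : Fin m) :
    Commute (tau2c (lam := lamOf μ) t) (tau2c s) := by
  rw [← commutatorElement_eq_one_iff_commute]
  have h := mk_rel μ (Or.inr (Or.inr ⟨t, s, rfl⟩))
  rw [map_commutatorElement] at h
  exact h

lemma comm_aa {i j : Fin n} (hij : i < j) :
    ⁅tau2a (lam := lamOf μ) i, tau2a (lam := lamOf μ) j⁆ = prodPow tau2c (fun t => lamOf μ t i j) := by
  have h := mk_rel μ (Or.inl ⟨i, j, hij, rfl⟩)
  rw [map_mul, map_commutatorElement, map_inv, map_prodPow] at h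
  exact mul_inv_eq_one.mp h

lemma c_central (t : Fin m) : tau2c (lam := lamOf μ) t ∈ Subgroup.center (TG μ) := by
  rw [Subgroup.mem_center_iff]
  intro g
  have hg : g ∈ Subgroup.closure (Set.range (ofG μ)) := by
    rw [closure_range_ofG]; trivial
  induction hg using Subgroup.closure_induction with
  | mem x hx =>
    obtain ⟨y, rfl⟩ := hx
    cases y with
    | inl i => exact comm_ac μ i t
    | inr s => exact comm_cc μ s t
  | one => simp
  | mul a b _ _ iha ihb => rw [mul_assoc, ihb, ← mul_assoc, iha, mul_assoc]
  | inv a _ iha =>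
    have : Commute a (tau2c t) := iha
    exact this.inv_left

def cZ (t : Fin m) : ↥(Subgroup.center (TG μ)) := ⟨tau2c t, c_central μ t⟩

def czprod (u : Fin m → ℤ) : TG μ := prodPow tau2c u

open scoped IsMulCommutative in
def PZ : Multiplicative (Fin m → ℤ) →* ↥(Subgroup.center (TG μ)) where
  toFun u := ∏ t, cZ μ t ^ (Multiplicative.toAdd u) t
  map_one' := by simp
  map_mul' u v := by
    simp only [toAdd_mul, Pi.add_apply, zpow_add]
    rw [Finset.prod_mul_distrib]

open scoped IsMulCommutative in
lemma coe_PZ (u : Multiplicative (Fin m → ℤ)) :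
    ((PZ μ u : ↥(Subgroup.center (TG μ))) : TG μ) = czprod μ (Multiplicative.toAdd u) := by
  rw [czprod]
  exact (prodPow_hom (Subgroup.center (TG μ)).subtype (cZ μ) (Multiplicative.toAdd u)).symm

lemma φH_czprod (u : Fin m → ℤ) : φH μ (czprod μ u) = ιH μ (Multiplicative.ofAdd u) := by
  rw [czprod, map_prodPow]
  have h : (fun t => φH μ (tau2c t))
      = fun t => ιH μ (Multiplicative.ofAdd (Pi.single t 1)) := by
    funext t; exact φH_c μ t
  rw [h, prodPow_hom (ιH μ) (fun t => Multiplicative.ofAdd (Pi.single t 1)), prod_single_ofAdd]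

lemma PZ_injective : Function.Injective (PZ μ) := by
  rw [injective_iff_map_eq_one]
  intro u hu
  have h0 : ((PZ μ u : ↥(Subgroup.center (TG μ))) : TG μ) = 1 := by rw [hu]; rfl
  rw [coe_PZ] at h0
  have h1 := congrArg (φH μ) h0
  rw [φH_czprod, map_one] at h1
  have h2 := congrArg Prod.snd h1
  have h3 : Multiplicative.toAdd u = 0 := h2
  have : u = Multiplicative.ofAdd (Multiplicative.toAdd u) := rfl
  rw [this, h3]
  rfl

def gG (p : PairIdx n) : TG μ := czprod μ (vv μ p)

def KK : Subgroup (TG μ) := Subgroup.closure (Set.range (gG μ))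

lemma gG_comm (p : PairIdx n) : gG μ p = ⁅tau2a (lam := lamOf μ) p.1.1, tau2a (lam := lamOf μ) p.1.2⁆ := by
  rcases p with ⟨⟨i, j⟩, hij⟩
  rw [comm_aa μ hij, gG, czprod]
  congr 1
  funext t
  simp [lamOf, vv, hij]

lemma gG_coe (p : PairIdx n) :
    gG μ p = ((PZ μ (Multiplicative.ofAdd (vv μ p)) : ↥(Subgroup.center (TG μ))) : TG μ) :=
  (coe_PZ μ _).symm

lemma K_le_center : KK μ ≤ Subgroup.center (TG μ) := by
  rw [KK, Subgroup.closure_le]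
  rintro x ⟨p, rfl⟩
  rw [gG_coe]
  exact (PZ μ _).2

def TT (μ : Fin m → PairIdx n → ℤ) : Subgroup (Multiplicative (Fin m → ℤ)) :=
  Subgroup.closure (Set.range (fun p : PairIdx n => Multiplicative.ofAdd (vv μ p)))

lemma map_map_TT :
    Subgroup.map (Subgroup.center (TG μ)).subtype (Subgroup.map (PZ μ) (TT μ)) = KK μ := by
  rw [TT, MonoidHom.map_closure, MonoidHom.map_closure, KK]
  congr 1
  rw [← Set.range_comp, ← Set.range_comp]
  have h : ((Subgroup.center (TG μ)).subtype ∘ (PZ μ) ∘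
      (fun p : PairIdx n => Multiplicative.ofAdd (vv μ p))) = gG μ := by
    funext p
    exact (gG_coe μ p).symm
  rw [h]

lemma conj_mem_K {k : TG μ} (hk : k ∈ KK μ) (g : TG μ) : g * k * g⁻¹ ∈ KK μ := by
  have hc := Subgroup.mem_center_iff.mp (K_le_center μ hk) g
  rw [hc, mul_inv_cancel_right]
  exact hk

lemma comm_gen_gen (x y : Fin n ⊕ Fin m) :
    ⁅ofG μ x, ofG μ y⁆ ∈ KK μ := by
  cases x with
  | inr t =>
    have h1 : ⁅ofG μ (Sum.inr t), ofG μ y⁆ = 1 := by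
      rw [commutatorElement_eq_one_iff_commute]
      exact (Subgroup.mem_center_iff.mp (c_central μ t) _).symm
    rw [h1]; exact Subgroup.one_mem _
  | inl i =>
    cases y with
    | inr t =>
      have h1 : ⁅ofG μ (Sum.inl i), ofG μ (Sum.inr t)⁆ = 1 := by
        rw [commutatorElement_eq_one_iff_commute]
        exact comm_ac μ i t
      rw [h1]; exact Subgroup.one_mem _
    | inl j =>
      rcases lt_trichotomy i j with hij | rfl | hji
      · rw [show ⁅ofG μ (Sum.inl i), ofG μ (Sum.inl j)⁆
            = gG μ ⟨(i, j), hij⟩ from (gG_comm μ ⟨(i, j), hij⟩).symm]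
        exact Subgroup.subset_closure ⟨_, rfl⟩
      · rw [commutatorElement_self]
        exact Subgroup.one_mem _
      · rw [show ⁅ofG μ (Sum.inl i), ofG μ (Sum.inl j)⁆
            = (⁅ofG μ (Sum.inl j), ofG μ (Sum.inl i)⁆)⁻¹ from
            (commutatorElement_inv _ _).symm]
        rw [show ⁅ofG μ (Sum.inl j), ofG μ (Sum.inl i)⁆
            = gG μ ⟨(j, i), hji⟩ from (gG_comm μ ⟨(j, i), hji⟩).symm]
        exact Subgroup.inv_mem _ (Subgroup.subset_closure ⟨_, rfl⟩)

lemma comm_mem_K (g h : TG μ) : ⁅g, h⁆ ∈ KK μ := by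
  have key : ∀ g : TG μ, g ∈ Subgroup.closure (Set.range (ofG μ)) → ∀ h : TG μ, ⁅g, h⁆ ∈ KK μ := by
    intro g hgmem
    induction hgmem using Subgroup.closure_induction with
    | mem x hx =>
      obtain ⟨x0, rfl⟩ := hx
      intro h
      have hh : h ∈ Subgroup.closure (Set.range (ofG μ)) := by
        rw [closure_range_ofG]; trivial
      induction hh using Subgroup.closure_induction with
      | mem y hy =>
        obtain ⟨y0, rfl⟩ := hy
        exact comm_gen_gen μ x0 y0
      | one =>
        rw [commutatorElement_one_right]
        exact Subgroup.one_mem _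
      | mul h₁ h₂ _ _ ih₁ ih₂ =>
        rw [show ⁅ofG μ x0, h₁ * h₂⁆
            = ⁅ofG μ x0, h₁⁆
              * (h₁ * ⁅ofG μ x0, h₂⁆ * h₁⁻¹) from by
          simp only [commutatorElement_def]; group]
        exact Subgroup.mul_mem _ ih₁ (conj_mem_K μ ih₂ h₁)
      | inv h₁ _ ih =>
        rw [show ⁅ofG μ x0, h₁⁻¹⁆
            = h₁⁻¹ * ⁅ofG μ x0, h₁⁆⁻¹ * h₁ from by
          simp only [commutatorElement_def]; group]
        simpa using conj_mem_K μ (Subgroup.inv_mem _ ih) h₁⁻¹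
    | one =>
      intro h
      rw [commutatorElement_one_left]
      exact Subgroup.one_mem _
    | mul g₁ g₂ _ _ ih₁ ih₂ =>
      intro h
      rw [show ⁅g₁ * g₂, h⁆ = (g₁ * ⁅g₂, h⁆ * g₁⁻¹) * ⁅g₁, h⁆ from by
        simp only [commutatorElement_def]; group]
      exact Subgroup.mul_mem _ (conj_mem_K μ (ih₂ h) g₁) (ih₁ h)
    | inv g₁ _ ih =>
      intro h
      rw [show ⁅g₁⁻¹, h⁆ = g₁⁻¹ * ⁅g₁, h⁆⁻¹ * g₁ from by
        simp only [commutatorElement_def]; group]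
      simpa using conj_mem_K μ (Subgroup.inv_mem _ (ih h)) g₁⁻¹
  apply key g ?_ h
  rw [closure_range_ofG]; trivial

lemma commutator_eq_K : commutator (TG μ) = KK μ := by
  apply le_antisymm
  · rw [commutator_def, Subgroup.commutator_le]
    intro g₁ _ g₂ _
    exact comm_mem_K μ g₁ g₂
  · rw [KK, Subgroup.closure_le]
    rintro x ⟨p, rfl⟩
    rw [gG_comm]
    rw [commutator_def]
    exact Subgroup.commutator_mem_commutator (Subgroup.mem_top _) (Subgroup.mem_top _)

lemma mem_TT_iff (x : Multiplicative (Fin m → ℤ)) :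
    x ∈ TT μ ↔ Multiplicative.toAdd x ∈ Submodule.span ℤ (Set.range (vv μ)) := by
  rw [TT]
  have h : Set.range (fun p : PairIdx n => Multiplicative.ofAdd (vv μ p))
      = Multiplicative.ofAdd '' (Set.range (vv μ)) := by
    rw [← Set.range_comp]; rfl
  rw [h, mem_mult_closure_iff, ← Submodule.span_int_eq_addSubgroupClosure,
    Submodule.mem_toAddSubgroup]

def eTS : ↥(TT μ) ≃* Multiplicative ↥(Submodule.span ℤ (Set.range (vv μ))) where
  toFun x := Multiplicative.ofAdd ⟨Multiplicative.toAdd x.1, (mem_TT_iff μ x.1).mp x.2⟩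
  invFun y := ⟨Multiplicative.ofAdd (Multiplicative.toAdd y).1,
    (mem_TT_iff μ _).mpr (by simpa using (Multiplicative.toAdd y).2)⟩
  left_inv x := Subtype.ext rfl
  right_inv y := rfl
  map_mul' x y := rfl

end
end St17
namespace St17
open Finset Function Filter

noncomputable section
open scoped Classical

variable {n m r : ℕ}

lemma card_pairIdx (n : ℕ) : Fintype.card (PairIdx n) = n * (n - 1) / 2 := by
  have e : PairIdx n ≃ (Σ j : Fin n, {i : Fin n // i < j}) :=
    { toFun := fun p => ⟨p.1.2, ⟨p.1.1, p.2⟩⟩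
      invFun := fun q => ⟨(q.2.1, q.1), q.2.2⟩
      left_inv := fun p => rfl
      right_inv := fun q => rfl }
  rw [Fintype.card_congr e, Fintype.card_sigma]
  have h : ∀ j : Fin n, Fintype.card {i : Fin n // i < j} = (j : ℕ) := by
    intro j
    have e2 : {i : Fin n // i < j} ≃ Fin (j : ℕ) :=
      { toFun := fun i => ⟨i.1, i.2⟩
        invFun := fun k => ⟨⟨k.1, lt_trans k.2 j.isLt⟩, k.2⟩
        left_inv := fun i => Subtype.ext rfl
        right_inv := fun k => rfl }
    rw [Fintype.card_congr e2, Fintype.card_fin]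
  simp only [h]
  rw [Fin.sum_univ_eq_sum_range (fun i => i) n]
  exact Finset.sum_range_id n

lemma tendsto_of_good (ρ : Fin r → PairIdx n) (τ : Fin r → Fin m)
    (hρ : Function.Injective ρ) (hτ : Function.Injective τ)
    (Q : (Fin m → PairIdx n → ℤ) → Prop)
    (hQ : ∀ μ, (Matrix.of (rowsQ ρ τ μ)).det ≠ 0 → Q μ) :
    Filter.Tendsto (fun ℓ : ℕ =>
      (Set.ncard {μ : Fin m → PairIdx n → ℤ | (∀ t p, |μ t p| ≤ (ℓ:ℤ)) ∧ Q μ} : ℝ) /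
        (2 * (ℓ:ℝ) + 1) ^ (m * Fintype.card (PairIdx n))) Filter.atTop (nhds 1) := by
  set N := Fintype.card (PairIdx n) with hN
  have bounds : ∀ ℓ : ℕ,
      1 - (r*r : ℝ)/(2*(ℓ:ℝ)+1) ≤
        (Set.ncard {μ : Fin m → PairIdx n → ℤ | (∀ t p, |μ t p| ≤ (ℓ:ℤ)) ∧ Q μ} : ℝ) /
          (2 * (ℓ:ℝ) + 1) ^ (m * N) ∧
      (Set.ncard {μ : Fin m → PairIdx n → ℤ | (∀ t p, |μ t p| ≤ (ℓ:ℤ)) ∧ Q μ} : ℝ) /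
          (2 * (ℓ:ℝ) + 1) ^ (m * N) ≤ 1 := by
    intro ℓ
    have hden_pos : (0:ℝ) < 2*(ℓ:ℝ)+1 := by positivity
    have hpow_pos : (0:ℝ) < (2*(ℓ:ℝ)+1) ^ (m*N) := by positivity
    have hset : {μ : Fin m → PairIdx n → ℤ | (∀ t p, |μ t p| ≤ (ℓ:ℤ)) ∧ Q μ}
        = (((boxF n m ℓ).filter Q : Finset _) : Set _) := by
      ext μ
      simp only [Set.mem_setOf_eq, Finset.coe_filter, Finset.mem_coe, Set.mem_setOf_eq]
      rw [mem_boxF]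
    have hncard : (Set.ncard {μ : Fin m → PairIdx n → ℤ | (∀ t p, |μ t p| ≤ (ℓ:ℤ)) ∧ Q μ})
        = ((boxF n m ℓ).filter Q).card := by
      rw [hset, Set.ncard_coe_finset]
    have hboxcard : (((boxF n m ℓ).card : ℕ) : ℝ) = (2*(ℓ:ℝ)+1) ^ (m*N) := by
      rw [card_boxF]
      push_cast
      ring
    have hgood_sub : (boxF n m ℓ).filter (fun μ => (Matrix.of (rowsQ ρ τ μ)).det ≠ 0)
        ⊆ (boxF n m ℓ).filter Q := by
      apply Finset.monotone_filter_right
      intro μ _ hμ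
      exact hQ μ hμ
    have hsplit := Finset.card_filter_add_card_filter_not
      (s := boxF n m ℓ) (p := fun μ => (Matrix.of (rowsQ ρ τ μ)).det ≠ 0)
    have hbadeq : (boxF n m ℓ).filter (fun μ => ¬ (Matrix.of (rowsQ ρ τ μ)).det ≠ 0)
        = (boxF n m ℓ).filter (fun μ => (Matrix.of (rowsQ ρ τ μ)).det = 0) := by
      apply Finset.filter_congr
      intro μ _
      simp
    rw [hbadeq] at hsplit
    have hbad := count_singular hρ hτ ℓ
    -- real versions
    set cQ : ℝ := (((boxF n m ℓ).filter Q).card : ℝ) with hcQ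
    set cG : ℝ := ((((boxF n m ℓ).filter
      (fun μ => (Matrix.of (rowsQ ρ τ μ)).det ≠ 0)).card : ℕ) : ℝ) with hcG
    set cB : ℝ := ((((boxF n m ℓ).filter
      (fun μ => (Matrix.of (rowsQ ρ τ μ)).det = 0)).card : ℕ) : ℝ) with hcB
    set B : ℝ := (2*(ℓ:ℝ)+1) ^ (m*N) with hB
    have f1 : cG + cB = B := by
      rw [hcG, hcB, ← hboxcard, ← Nat.cast_add]
      exact Nat.cast_inj.mpr hsplit
    have f2 : cG ≤ cQ := Nat.cast_le.mpr (Finset.card_le_card hgood_sub)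
    have f3 : cB * (2*(ℓ:ℝ)+1) ≤ (r*r : ℝ) * B := by
      have h2 := Nat.cast_le (α := ℝ).mpr hbad
      push_cast at h2
      rw [hcB, ← hboxcard]
      exact h2
    have f4 : cQ ≤ B := by
      rw [← hboxcard]
      exact Nat.cast_le.mpr (Finset.card_filter_le _ _)
    constructor
    · rw [hncard, le_div_iff₀ hpow_pos]
      have expand : (1 - (r*r : ℝ)/(2*(ℓ:ℝ)+1)) * B
          = B - (r*r : ℝ) * B / (2*(ℓ:ℝ)+1) := by ring
      rw [expand]
      have f3' : cB ≤ (r*r : ℝ) * B / (2*(ℓ:ℝ)+1) := by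
        rw [le_div_iff₀ hden_pos]
        exact f3
      linarith [f3', f1, f2]
    · rw [hncard, div_le_one hpow_pos]
      exact f4
  have h0 : Tendsto (fun ℓ : ℕ => 1 - (r*r:ℝ)/(2*(ℓ:ℝ)+1)) atTop (nhds 1) := by
    have h1 : Tendsto (fun ℓ : ℕ => 2*(ℓ:ℝ)+1) atTop atTop := by
      apply Filter.tendsto_atTop_add_const_right
      exact (tendsto_natCast_atTop_atTop (R := ℝ)).const_mul_atTop two_pos
    have h2 : Tendsto (fun ℓ : ℕ => (r*r:ℝ)/(2*(ℓ:ℝ)+1)) atTop (nhds 0) :=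
      Filter.Tendsto.div_atTop tendsto_const_nhds h1
    have := (tendsto_const_nhds (x := (1:ℝ)) (f := atTop (α := ℕ))).sub h2
    simpa using this
  exact tendsto_of_tendsto_of_tendsto_of_le_of_le h0 tendsto_const_nhds
    (fun ℓ => (bounds ℓ).1) (fun ℓ => (bounds ℓ).2)
end
end St17

open St17 in
/-- Fix n ≥ 2, m ≥ 1 and let r = min m (n(n−1)/2). Among the tuples λ with
|λ_{t,i,j}| ≤ ℓ, the proportion of those with rank(G') = r tends to 1 as ℓ → ∞. In
particular if m > n(n−1)/2, the proportion of those for which {[aᵢ,aⱼ] : i < j} is a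
basis of the free abelian group G' — equivalently, the vectors
(λ_{1,i,j},…,λ_{m,i,j}) ∈ ℤᵐ (i < j) are linearly independent — tends to 1. -/
theorem stmt17 (n m : ℕ) (hn : 2 ≤ n) (hm : 1 ≤ m) :
    Filter.Tendsto (fun ℓ : ℕ =>
      (Set.ncard {μ : Fin m → PairIdx n → ℤ |
          (∀ t p, |μ t p| ≤ (ℓ : ℤ)) ∧
          grpRank ↥(commutator (Tau2Group n m (lamOf μ))) = min m (n * (n - 1) / 2)} : ℝ) /
        (2 * (ℓ : ℝ) + 1) ^ (m * (n * (n - 1) / 2)))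
      Filter.atTop (nhds 1) ∧
    (n * (n - 1) / 2 < m →
      Filter.Tendsto (fun ℓ : ℕ =>
        (Set.ncard {μ : Fin m → PairIdx n → ℤ |
            (∀ t p, |μ t p| ≤ (ℓ : ℤ)) ∧
            LinearIndependent ℤ (fun p : PairIdx n => (fun t : Fin m => μ t p))} : ℝ) /
          (2 * (ℓ : ℝ) + 1) ^ (m * (n * (n - 1) / 2)))
        Filter.atTop (nhds 1)) := by
  classical
  have hN : Fintype.card (PairIdx n) = n * (n - 1) / 2 := card_pairIdx n
  set r : ℕ := min m (n * (n - 1) / 2) with hr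
  have hrN : r ≤ Fintype.card (PairIdx n) := by rw [hN]; exact min_le_right _ _
  have hrm : r ≤ m := min_le_left _ _
  set eP := Fintype.equivFin (PairIdx n) with heP
  set ρ : Fin r → PairIdx n := fun i => eP.symm (Fin.castLE hrN i) with hρdef
  set τ : Fin r → Fin m := fun i => Fin.castLE hrm i with hτdef
  have hρ : Function.Injective ρ := by
    intro i j h
    exact Fin.castLE_injective hrN (eP.symm.injective h)
  have hτ : Function.Injective τ := Fin.castLE_injective hrm
  constructor
  · have := tendsto_of_good ρ τ hρ hτ
      (fun μ => grpRank ↥(commutator (Tau2Group n m (lamOf μ))) = min m (n * (n - 1) / 2))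
      ?_
    · rw [hN] at this
      exact this
    · intro μ hdet
      have h1 : grpRank ↥(commutator (TG μ)) =
          Module.finrank ℤ (Submodule.span ℤ (Set.range (vv μ))) := by
        rw [commutator_eq_K μ, ← map_map_TT μ]
        rw [← grpRank_congr (Subgroup.equivMapOfInjective _
          ((Subgroup.center (TG μ)).subtype) (Subgroup.subtype_injective _))]
        rw [← grpRank_congr (Subgroup.equivMapOfInjective _ (PZ μ) (PZ_injective μ))]
        rw [grpRank_congr (eTS μ)]
        exact grpRank_multiplicative
      rw [show grpRank ↥(commutator (Tau2Group n m (lamOf μ)))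
          = grpRank ↥(commutator (TG μ)) from rfl, h1]
      rw [finrank_span_vv hdet (by rw [hN] : r = min m (Fintype.card (PairIdx n)))]
  · intro hlt
    have hreq : r = n * (n - 1) / 2 := min_eq_right (le_of_lt hlt)
    have := tendsto_of_good ρ τ hρ hτ
      (fun μ => LinearIndependent ℤ (fun p : PairIdx n => (fun t : Fin m => μ t p)))
      ?_
    · rw [hN] at this
      exact this
    · intro μ hdet
      have hbij : Function.Bijective ρ := by
        rw [Fintype.bijective_iff_injective_and_card]
        refine ⟨hρ, ?_⟩
        rw [Fintype.card_fin, hN, hreq]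
      have hli := linIndep_of_det hdet
      have : LinearIndependent ℤ (vv μ ∘ ⇑(Equiv.ofBijective ρ hbij)) := hli
      exact (linearIndependent_equiv (Equiv.ofBijective ρ hbij)).mp this
end
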